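/- arXiv:2110.09070 — 5 statements merged into one kernel-verified Lean document; each statement's English description precedes it below -/
import Mathlib

section
/- Let $(V,N)$ and $(V',N')$ be pairs of finite-dimensional $\mathbb{Z}$-graded complex vector spaces with degree-$1$ endomorphisms. Then $(V,N)$ is isomorphic to $(V',N')$ (as graded spaces with endomorphisms) if and only if $V \cong V'$ as graded vector spaces and the restriction of $N$ to $\mathrm{Image}\,N$ is isomorphic to the restriction of $N'$ to $\mathrm{Image}\,N'$ (as graded spaces with endomorphisms). -/
open Module LinearMap

/-- A complement of `p` inside `q` when `p ≤ q`. -/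
theorem vn_compl_inside {M : Type*} [AddCommGroup M] [Module ℂ M]
    {p q : Submodule ℂ M} (hpq : p ≤ q) :
    ∃ t : Submodule ℂ M, t ≤ q ∧ p ⊓ t = ⊥ ∧ p ⊔ t = q := by
  obtain ⟨c, hc⟩ := Submodule.exists_isCompl (p.comap q.subtype)
  refine ⟨c.map q.subtype, Submodule.map_subtype_le _ _, ?_, ?_⟩
  · rw [eq_bot_iff]
    rintro x ⟨hxp, y, hyc, rfl⟩
    have h1 : y ∈ p.comap q.subtype ⊓ c := ⟨hxp, hyc⟩
    rw [hc.inf_eq_bot] at h1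
    simp only [Submodule.mem_bot] at h1
    simp [h1]
  · have h2 := congrArg (Submodule.map q.subtype) hc.sup_eq_top
    rwa [Submodule.map_sup, Submodule.map_top, Submodule.range_subtype,
      Submodule.map_comap_subtype, inf_eq_right.2 hpq] at h2

/-- Key extension lemma: given an isomorphism `f : R ≅ R'` of subspaces and an
isomorphism `g : range n ≅ range n'` compatible with `f`, and equal dimensions,
there is a full isomorphism `e : A ≅ A'` extending `f` and intertwining `n, n'`
via `g`. -/
theorem vn_key {A B A' B' : Type} [AddCommGroup A] [Module ℂ A]
    [AddCommGroup B] [Module ℂ B] [AddCommGroup A'] [Module ℂ A']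
    [AddCommGroup B'] [Module ℂ B'] [FiniteDimensional ℂ A] [FiniteDimensional ℂ A']
    (n : A →ₗ[ℂ] B) (n' : A' →ₗ[ℂ] B') (R : Submodule ℂ A) (R' : Submodule ℂ A')
    (f : R ≃ₗ[ℂ] R') (g : LinearMap.range n ≃ₗ[ℂ] LinearMap.range n')
    (hAA' : finrank ℂ A = finrank ℂ A')
    (hc : ∀ r : R, n' (f r : A') = (g ⟨n (r : A), LinearMap.mem_range_self n (r : A)⟩ : B')) :
    ∃ e : A ≃ₗ[ℂ] A', (∀ r : R, e r = f r) ∧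
      ∀ a : A, n' (e a) = (g ⟨n a, LinearMap.mem_range_self n a⟩ : B') := by
  classical
  set K : Submodule ℂ A := LinearMap.ker n with hKdef
  set K' : Submodule ℂ A' := LinearMap.ker n' with hK'def
  -- compatibility in the other direction
  have hc' : ∀ r' : R', (⟨n' (r' : A'), LinearMap.mem_range_self n' (r' : A')⟩ : LinearMap.range n')
      = g ⟨n (f.symm r' : A), LinearMap.mem_range_self n _⟩ := by
    intro r'
    have h := hc (f.symm r')
    rw [f.apply_symm_apply] at h
    exact Subtype.ext h
  -- f maps R ⊓ K into R' ⊓ K' and back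
  have fmem : ∀ x : A, ∀ hx : x ∈ R ⊓ K, (f ⟨x, hx.1⟩ : A') ∈ R' ⊓ K' := by
    intro x hx
    refine ⟨(f ⟨x, hx.1⟩).2, LinearMap.mem_ker.mpr ?_⟩
    have hnx : n x = 0 := hx.2
    have h := hc ⟨x, hx.1⟩
    rw [h]
    have h0 : (⟨n x, LinearMap.mem_range_self n x⟩ : LinearMap.range n) = 0 :=
      Subtype.ext hnx
    rw [h0, map_zero]
    rfl
  have fmem' : ∀ x : A', ∀ hx : x ∈ R' ⊓ K', (f.symm ⟨x, hx.1⟩ : A) ∈ R ⊓ K := by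
    intro x hx
    refine ⟨(f.symm ⟨x, hx.1⟩).2, LinearMap.mem_ker.mpr ?_⟩
    have h := hc' ⟨x, hx.1⟩
    have hzero : (⟨n' x, LinearMap.mem_range_self n' x⟩ : LinearMap.range n') = 0 :=
      Subtype.ext hx.2
    rw [hzero] at h
    have h2 : (⟨n (f.symm ⟨x, hx.1⟩), LinearMap.mem_range_self n _⟩ :
        LinearMap.range n) = 0 := by
      apply g.injective; rw [← h, map_zero]
    exact congrArg Subtype.val h2
  -- dimension bookkeeping
  have hrange : finrank ℂ (LinearMap.range n) = finrank ℂ (LinearMap.range n') :=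
    g.finrank_eq
  have hKdim : finrank ℂ K = finrank ℂ K' := by
    have h1 := LinearMap.finrank_range_add_finrank_ker n
    have h2 := LinearMap.finrank_range_add_finrank_ker n'
    rw [hKdef, hK'def]
    omega
  have hRKdim : finrank ℂ ↥(R ⊓ K) = finrank ℂ ↥(R' ⊓ K') := by
    refine le_antisymm ?_ ?_
    · refine LinearMap.finrank_le_finrank_of_injective
        (f := LinearMap.codRestrict (R' ⊓ K')
          ((R'.subtype.comp f.toLinearMap).comp
            (Submodule.inclusion (inf_le_left : R ⊓ K ≤ R)))
          (fun x => fmem x x.2)) ?_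
      intro x y hxy
      have h := congrArg Subtype.val hxy
      change ((f (Submodule.inclusion (inf_le_left : R ⊓ K ≤ R) x)) : A') =
        f (Submodule.inclusion (inf_le_left : R ⊓ K ≤ R) y) at h
      have h2 := f.injective (Subtype.ext h)
      have h3 := congrArg Subtype.val h2
      simp only [Submodule.coe_inclusion] at h3
      exact Subtype.ext h3
    · refine LinearMap.finrank_le_finrank_of_injective
        (f := LinearMap.codRestrict (R ⊓ K)
          ((R.subtype.comp f.symm.toLinearMap).comp
            (Submodule.inclusion (inf_le_left : R' ⊓ K' ≤ R')))
          (fun x => fmem' x x.2)) ?_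
      intro x y hxy
      have h := congrArg Subtype.val hxy
      change ((f.symm (Submodule.inclusion (inf_le_left : R' ⊓ K' ≤ R') x)) : A) =
        f.symm (Submodule.inclusion (inf_le_left : R' ⊓ K' ≤ R') y) at h
      have h2 := f.symm.injective (Subtype.ext h)
      have h3 := congrArg Subtype.val h2
      simp only [Submodule.coe_inclusion] at h3
      exact Subtype.ext h3
  -- complements
  obtain ⟨T, hTK, hTdisj, hTsup⟩ := vn_compl_inside (inf_le_right : R ⊓ K ≤ K)
  obtain ⟨T', hT'K', hT'disj, hT'sup⟩ := vn_compl_inside (inf_le_right : R' ⊓ K' ≤ K')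
  obtain ⟨U, hU⟩ := Submodule.exists_isCompl (R ⊔ K)
  have hTdim : finrank ℂ T = finrank ℂ T' := by
    have h1 := Submodule.finrank_sup_add_finrank_inf_eq (R ⊓ K) T
    have h2 := Submodule.finrank_sup_add_finrank_inf_eq (R' ⊓ K') T'
    rw [hTsup, hTdisj] at h1
    rw [hT'sup, hT'disj] at h2
    simp only [finrank_bot] at h1 h2
    omega
  obtain ⟨j⟩ := FiniteDimensional.nonempty_linearEquiv_of_finrank_eq hTdim
  -- section of n' on its range
  obtain ⟨σ, hσ⟩ := n'.rangeRestrict.exists_rightInverse_of_surjective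
    (LinearMap.range_eq_top.2 n'.surjective_rangeRestrict)
  have hσcoe : ∀ y : LinearMap.range n', n' (σ y) = (y : B') := by
    intro y
    have := congrArg (fun m => m y) hσ
    simpa using congrArg Subtype.val this
  -- the "G" map
  set G : A →ₗ[ℂ] A' := σ ∘ₗ g.toLinearMap ∘ₗ n.rangeRestrict with hGdef
  have hG : ∀ a : A, n' (G a) = (g ⟨n a, LinearMap.mem_range_self n a⟩ : B') := by
    intro a
    simp only [hGdef, LinearMap.comp_apply]
    exact hσcoe _
  have hGker : ∀ a : A, a ∈ K → G a = 0 := by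
    intro a ha
    have h0 : n.rangeRestrict a = 0 := by
      apply Subtype.ext
      simpa [hKdef] using ha
    simp only [hGdef, LinearMap.comp_apply, h0, map_zero]
  -- the two complement structures
  have hRC : IsCompl R (T ⊔ U) := by
    apply IsCompl.of_eq
    · rw [eq_bot_iff]
      intro x hx
      obtain ⟨hxR, hxTU⟩ := Submodule.mem_inf.mp hx
      obtain ⟨t, ht, u, hu, rfl⟩ := Submodule.mem_sup.mp hxTU
      have hu0 : u = 0 := by
        have hmem : u ∈ (R ⊔ K) ⊓ U := by
          refine ⟨?_, hu⟩
          have h1 : t + u ∈ R ⊔ K := Submodule.mem_sup_left hxR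
          have h2 : t ∈ R ⊔ K := Submodule.mem_sup_right (hTK ht)
          have := sub_mem h1 h2
          simpa using this
        rw [hU.inf_eq_bot] at hmem
        simpa using hmem
      subst hu0
      rw [add_zero] at hxR ⊢
      have : t ∈ (R ⊓ K) ⊓ T := ⟨⟨hxR, hTK ht⟩, ht⟩
      rw [hTdisj] at this
      simpa using this
    · have hRT : R ⊔ T = R ⊔ K := by
        refine le_antisymm (sup_le le_sup_left (le_trans hTK le_sup_right)) ?_
        refine sup_le le_sup_left ?_
        rw [← hTsup]
        exact sup_le (le_trans inf_le_left le_sup_left) le_sup_right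
      have hsup2 : R ⊔ (T ⊔ U) = ⊤ := by
        rw [← sup_assoc, hRT]; exact hU.sup_eq_top
      exact hsup2
  have hTD : IsCompl T (R ⊔ U) := by
    apply IsCompl.of_eq
    · rw [eq_bot_iff]
      intro x hx
      obtain ⟨hxT, hxRU⟩ := Submodule.mem_inf.mp hx
      obtain ⟨r, hr, u, hu, rfl⟩ := Submodule.mem_sup.mp hxRU
      have hu0 : u = 0 := by
        have hmem : u ∈ (R ⊔ K) ⊓ U := by
          refine ⟨?_, hu⟩
          have h1 : r + u ∈ R ⊔ K := Submodule.mem_sup_right (hTK hxT)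
          have h2 : r ∈ R ⊔ K := Submodule.mem_sup_left hr
          have := sub_mem h1 h2
          simpa using this
        rw [hU.inf_eq_bot] at hmem
        simpa using hmem
      subst hu0
      rw [add_zero] at hxT ⊢
      have : r ∈ (R ⊓ K) ⊓ T := ⟨⟨hr, hTK hxT⟩, hxT⟩
      rw [hTdisj] at this
      simpa using this
    · apply le_antisymm le_top
      rw [← hU.sup_eq_top]
      have hKle : K ≤ R ⊔ T := by
        rw [← hTsup]
        exact sup_le (le_trans inf_le_left le_sup_left) le_sup_right
      refine sup_le (sup_le ?_ ?_) ?_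
      · exact le_trans le_sup_left le_sup_right
      · exact hKle.trans (sup_le (le_trans le_sup_left le_sup_right) le_sup_left)
      · exact le_trans le_sup_right le_sup_right
  set prR : A →ₗ[ℂ] R := Submodule.linearProjOfIsCompl R (T ⊔ U) hRC with hprR
  set prT : A →ₗ[ℂ] T := Submodule.linearProjOfIsCompl T (R ⊔ U) hTD with hprT
  set corr1 : A →ₗ[ℂ] A' := (R'.subtype ∘ₗ f.toLinearMap - G ∘ₗ R.subtype) ∘ₗ prR
    with hcorr1
  set corr2 : A →ₗ[ℂ] A' := T'.subtype ∘ₗ j.toLinearMap ∘ₗ prT with hcorr2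
  set eL : A →ₗ[ℂ] A' := G + corr1 + corr2 with heL
  -- eL extends f
  have heLR : ∀ r : R, eL r = (f r : A') := by
    intro r
    have h1 : prR (r : A) = r := Submodule.linearProjOfIsCompl_apply_left hRC r
    have h2 : prT (r : A) = 0 :=
      Submodule.linearProjOfIsCompl_apply_right' hTD (Submodule.mem_sup_left r.2)
    simp only [heL, hcorr1, hcorr2, LinearMap.add_apply, LinearMap.comp_apply,
      LinearMap.sub_apply, h1, h2, map_zero, Submodule.coe_subtype,
      ZeroMemClass.coe_zero]
    abel
  -- eL intertwines
  have heLn : ∀ a : A, n' (eL a) = (g ⟨n a, LinearMap.mem_range_self n a⟩ : B') := by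
    intro a
    have hcorr2mem : corr2 a ∈ K' := hT'K' (j (prT a)).2
    have hn'corr2 : n' (corr2 a) = 0 := LinearMap.mem_ker.mp hcorr2mem
    have hn'corr1 : n' (corr1 a) = 0 := by
      have hca : corr1 a = ↑(f (prR a)) - G ↑(prR a) := rfl
      rw [hca, map_sub, hc (prR a), hG]
      simp
    simp only [heL, LinearMap.add_apply, map_add, hn'corr1, hn'corr2, add_zero]
    exact hG a
  -- injectivity
  have hinj : Function.Injective eL := by
    rw [← LinearMap.ker_eq_bot, eq_bot_iff]
    intro a ha
    simp only [LinearMap.mem_ker] at ha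
    have hna : n a = 0 := by
      have h1 := heLn a
      rw [ha, map_zero] at h1
      have h2 : (g ⟨n a, LinearMap.mem_range_self n a⟩ :
          LinearMap.range n') = 0 := Subtype.ext h1.symm
      have h3 : (⟨n a, LinearMap.mem_range_self n a⟩ : LinearMap.range n) = 0 := by
        apply g.injective; rw [h2, map_zero]
      exact congrArg Subtype.val h3
    have haK : a ∈ K := LinearMap.mem_ker.mpr hna
    have haRK : a ∈ (R ⊓ K) ⊔ T := by rw [hTsup]; exact haK
    rw [Submodule.mem_sup] at haRK
    obtain ⟨p, hp, t, ht, rfl⟩ := haRK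
    -- compute eL (p + t)
    have hEp : eL p = ((f (⟨p, hp.1⟩ : ↥R)) : A') := heLR ⟨p, hp.1⟩
    have hEt : eL t = ((j (⟨t, ht⟩ : ↥T)) : A') := by
      have hGt : G t = 0 := hGker t (hTK ht)
      have hprRt : prR t = 0 :=
        Submodule.linearProjOfIsCompl_apply_right' hRC (Submodule.mem_sup_left ht)
      have hprTt : prT t = ⟨t, ht⟩ :=
        Submodule.linearProjOfIsCompl_apply_left hTD ⟨t, ht⟩
      simp only [heL, hcorr1, hcorr2, LinearMap.add_apply, LinearMap.comp_apply,
        hGt, hprRt, map_zero, Submodule.coe_subtype, zero_add]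
      rw [hprTt]
      rfl
    rw [map_add, hEp, hEt] at ha
    have hfp : (f ⟨p, hp.1⟩ : A') ∈ (R' ⊓ K') ⊓ T' := by
      refine ⟨fmem p hp, ?_⟩
      have heq : (f ⟨p, hp.1⟩ : A') = -(j ⟨t, ht⟩ : A') :=
        eq_neg_of_add_eq_zero_left ha
      rw [heq]
      exact T'.neg_mem (j ⟨t, ht⟩).2
    rw [hT'disj] at hfp
    have hfp0 : (f ⟨p, hp.1⟩ : A') = 0 := by simpa using hfp
    have hp0 : p = 0 := by
      have h4 : f ⟨p, hp.1⟩ = 0 := Subtype.ext hfp0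
      have h5 : (⟨p, hp.1⟩ : ↥R) = 0 := (LinearEquiv.map_eq_zero_iff f).mp h4
      exact congrArg Subtype.val h5
    have hjt0 : (j ⟨t, ht⟩ : A') = 0 := by
      rw [hfp0, zero_add] at ha
      exact ha
    have ht0 : t = 0 := by
      have h4 : j ⟨t, ht⟩ = 0 := Subtype.ext hjt0
      have h5 : (⟨t, ht⟩ : ↥T) = 0 := (LinearEquiv.map_eq_zero_iff j).mp h4
      exact congrArg Subtype.val h5
    simp [hp0, ht0]
  -- surjectivity via dimensions
  have hsurj : Function.Surjective eL := by
    rw [← LinearMap.range_eq_top]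
    apply Submodule.eq_top_of_finrank_eq
    rw [LinearMap.finrank_range_of_inj hinj, hAA']
  exact ⟨LinearEquiv.ofBijective eL ⟨hinj, hsurj⟩, heLR, heLn⟩

/-- Cast between components of a graded vector space along an index equality. -/
def vnCast (V : ℤ → Type) [∀ i, AddCommGroup (V i)] [∀ i, Module ℂ (V i)]
    {i j : ℤ} (h : i = j) : V i ≃ₗ[ℂ] V j := by
  subst h; exact LinearEquiv.refl ℂ (V i)

/-- An isomorphism of `VN`-pairs: a family of degree-preserving linear equivalences
commuting with the degree-one endomorphisms. -/
def VNIso (V : ℤ → Type) [∀ i, AddCommGroup (V i)] [∀ i, Module ℂ (V i)]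
    (N : ∀ i, V i →ₗ[ℂ] V (i + 1))
    (V' : ℤ → Type) [∀ i, AddCommGroup (V' i)] [∀ i, Module ℂ (V' i)]
    (N' : ∀ i, V' i →ₗ[ℂ] V' (i + 1)) : Prop :=
  ∃ e : ∀ i, V i ≃ₗ[ℂ] V' i, ∀ (i : ℤ) (x : V i), e (i + 1) (N i x) = N' i (e i x)

/-- The degree-one endomorphism induced by `N` on the image pair
`(Image N, N|_{Image N})`; here the degree-`(i+1)` component of `Image N`
is `range (N i) ⊆ V (i+1)`. -/
noncomputable def imageMap (V : ℤ → Type) [∀ i, AddCommGroup (V i)] [∀ i, Module ℂ (V i)]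
    (N : ∀ i, V i →ₗ[ℂ] V (i + 1)) (i : ℤ) :
    ↥(LinearMap.range (N i)) →ₗ[ℂ] ↥(LinearMap.range (N (i + 1))) :=
  LinearMap.codRestrict (LinearMap.range (N (i + 1)))
    ((N (i + 1)).domRestrict (LinearMap.range (N i)))
    (fun x => LinearMap.mem_range_self _ _)

/-- Two `VN`-pairs `(V,N)` and `(V',N')` of finite-dimensional
`ℤ`-graded complex vector spaces with degree-one endomorphisms are isomorphic iff
`V ≅ V'` as graded vector spaces and `(Image N, N|_{Image N}) ≅ (Image N', N'|_{Image N'})`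
as `VN`-pairs. -/
theorem vnIso_iff_graded_iso_and_image_iso
    (V : ℤ → Type) [∀ i, AddCommGroup (V i)] [∀ i, Module ℂ (V i)]
    [∀ i, FiniteDimensional ℂ (V i)] (hV : {i : ℤ | Nontrivial (V i)}.Finite)
    (N : ∀ i, V i →ₗ[ℂ] V (i + 1))
    (V' : ℤ → Type) [∀ i, AddCommGroup (V' i)] [∀ i, Module ℂ (V' i)]
    [∀ i, FiniteDimensional ℂ (V' i)] (hV' : {i : ℤ | Nontrivial (V' i)}.Finite)
    (N' : ∀ i, V' i →ₗ[ℂ] V' (i + 1)) :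
    VNIso V N V' N' ↔
      ((∀ i, Nonempty (V i ≃ₗ[ℂ] V' i)) ∧
        VNIso (fun i => ↥(LinearMap.range (N i))) (imageMap V N)
              (fun i => ↥(LinearMap.range (N' i))) (imageMap V' N')) := by
  constructor
  · rintro ⟨e, he⟩
    refine ⟨fun i => ⟨e i⟩, ?_⟩
    have hmap : ∀ i, (LinearMap.range (N i)).map (e (i + 1) : V (i+1) →ₗ[ℂ] V' (i+1))
        = LinearMap.range (N' i) := by
      intro i
      have hcomp : (e (i + 1) : V (i+1) →ₗ[ℂ] V' (i+1)) ∘ₗ N i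
          = (N' i) ∘ₗ (e i : V i →ₗ[ℂ] V' i) := LinearMap.ext (he i)
      rw [← LinearMap.range_comp, hcomp,
        LinearMap.range_comp_of_range_eq_top _ (LinearEquiv.range (e i))]
    refine ⟨fun i => (e (i + 1)).ofSubmodules _ _ (hmap i), ?_⟩
    intro i x
    apply Subtype.ext
    have h1 : ((e (i + 1 + 1)).ofSubmodules _ _ (hmap (i + 1))
        (imageMap V N i x) : V' (i + 1 + 1)) = e (i + 1 + 1) (N (i + 1) x) :=
      LinearEquiv.ofSubmodules_apply _ _ _
    have h2 : ((imageMap V' N' i) ((e (i + 1)).ofSubmodules _ _ (hmap i) x) :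
        V' (i + 1 + 1)) = N' (i + 1) (e (i + 1) x) := by
      have h3 : (((e (i + 1)).ofSubmodules _ _ (hmap i) x : V' (i + 1))) =
          e (i + 1) x := LinearEquiv.ofSubmodules_apply _ _ _
      change N' (i + 1) (((e (i + 1)).ofSubmodules _ _ (hmap i) x : V' (i + 1))) = _
      rw [h3]
    rw [h1, h2]
    exact he (i + 1) x
  · rintro ⟨hdim, φ, hφ⟩
    -- apply the key lemma at each degree
    have key : ∀ i : ℤ, ∃ E : V (i + 1) ≃ₗ[ℂ] V' (i + 1),
        (∀ r : LinearMap.range (N i), E r = (φ i r : V' (i + 1))) ∧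
        (∀ a : V (i + 1), N' (i + 1) (E a) =
          (φ (i + 1) ⟨N (i + 1) a, LinearMap.mem_range_self _ a⟩ : V' (i + 1 + 1))) := by
      intro i
      refine vn_key (N (i + 1)) (N' (i + 1)) (LinearMap.range (N i))
        (LinearMap.range (N' i)) (φ i) (φ (i + 1))
        ((hdim (i + 1)).some.finrank_eq) ?_
      intro r
      have h := hφ i r
      have h1 : imageMap V N i r =
          (⟨N (i + 1) r, LinearMap.mem_range_self _ _⟩ :
            LinearMap.range (N (i + 1))) := rfl
      rw [h1] at h
      have h2 := congrArg Subtype.val h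
      simp only [imageMap, LinearMap.codRestrict_apply,
        LinearMap.domRestrict_apply] at h2
      exact h2.symm
    choose E hE1 hE2 using key
    have H : ∀ j : ℤ, ∃ ej : V j ≃ₗ[ℂ] V' j,
        (∀ x : V j, N' j (ej x) =
          (φ j ⟨N j x, LinearMap.mem_range_self _ x⟩ : V' (j + 1))) ∧
        (∀ (i : ℤ) (h : i + 1 = j) (x : V i),
          ej (vnCast V h (N i x)) =
            vnCast V' h (φ i ⟨N i x, LinearMap.mem_range_self _ x⟩ : V' (i + 1))) := by
      intro j
      obtain ⟨k, hk⟩ : ∃ k : ℤ, k + 1 = j := ⟨j - 1, by ring⟩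
      subst hk
      refine ⟨E k, hE2 k, ?_⟩
      intro i h x
      have hik : i = k := by omega
      subst hik
      exact hE1 i ⟨N i x, LinearMap.mem_range_self _ x⟩
    choose e he1 he2 using H
    refine ⟨e, fun i x => ?_⟩
    have l1 := he2 (i + 1) i rfl x
    have l2 := he1 i x
    exact l1.trans l2.symm
end

section
/- Let $\mathfrak{o}$ be a discrete valuation ring (noetherian local), $N$ an $\mathfrak{o}$-module of finite length, and $L, L'$ finitely generated free $\mathfrak{o}$-modules of the same rank with surjective homomorphisms $f: L \twoheadrightarrow N$ and $f': L' \twoheadrightarrow N$. Then there exists an isomorphism $\alpha: L \to L'$ of $\mathfrak{o}$-modules with $f = f' \circ \alpha$. -/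
open Submodule Module Function IsLocalRing

section Aux

variable {𝒪 : Type} [CommRing 𝒪] [IsDomain 𝒪] [IsDiscreteValuationRing 𝒪]

local notation "𝔪" => IsLocalRing.maximalIdeal 𝒪

/-- Elements independent mod the maximal ideal are linearly independent. -/
lemma aux_linearIndependent {L : Type} [AddCommGroup L] [Module 𝒪 L] [Module.Free 𝒪 L]
    {d : ℕ} {x : Fin d → L}
    (hx : ∀ c : Fin d → 𝒪, (∑ i, c i • x i) ∈ (𝔪 • ⊤ : Submodule 𝒪 L) → ∀ i, c i ∈ 𝔪) :
    LinearIndependent 𝒪 x := by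
  rw [Fintype.linearIndependent_iff]
  intro c hc
  by_contra hne
  push_neg at hne
  obtain ⟨g, hg⟩ := (inferInstance : (Ideal.span (Set.range c)).IsPrincipal)
  have hgmem : ∀ i, c i ∈ Ideal.span {g} := fun i => by
    show c i ∈ Submodule.span 𝒪 ({g} : Set 𝒪)
    rw [← hg]; exact Ideal.subset_span ⟨i, rfl⟩
  choose e he using fun i => Ideal.mem_span_singleton'.mp (hgmem i)
  have hg0 : g ≠ 0 := by
    intro hg0
    obtain ⟨i, hi⟩ := hne
    exact hi (by rw [← he i, hg0, mul_zero])
  have hsum : g • (∑ i, e i • x i) = 0 := by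
    rw [Finset.smul_sum]
    rw [← hc]
    congr 1
    ext i
    rw [smul_smul, mul_comm, he i]
  have h0 : (∑ i, e i • x i) = 0 := by
    rcases smul_eq_zero.mp hsum with h | h
    · exact absurd h hg0
    · exact h
  have hem : ∀ i, e i ∈ 𝔪 := hx e (by rw [h0]; exact zero_mem _)
  have hgm : g ∈ (𝔪 : Ideal 𝒪) * Ideal.span {g} := by
    have hgmem' : g ∈ Ideal.span (Set.range c) := by
      rw [hg]; exact Ideal.mem_span_singleton_self g
    refine Ideal.span_le.mpr ?_ hgmem'
    rintro _ ⟨i, rfl⟩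
    rw [← he i]
    exact Ideal.mul_mem_mul (hem i) (Ideal.mem_span_singleton_self g)
  obtain ⟨y, hy, hyg⟩ := Ideal.mem_mul_span_singleton.mp hgm
  have h1y : (y - 1) * g = 0 := by rw [sub_mul, one_mul, hyg, sub_self]
  rcases mul_eq_zero.mp h1y with h | h
  · have : (1 : 𝒪) ∈ (𝔪 : Ideal 𝒪) := by
      have : y = 1 := by linear_combination h
      rwa [this] at hy
    exact (Ideal.IsMaximal.ne_top inferInstance) (Ideal.eq_top_of_isUnit_mem _ this isUnit_one)
  · exact hg0 h

/-- The span of elements independent mod the maximal ideal is a saturated submodule. -/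
lemma aux_saturated {L : Type} [AddCommGroup L] [Module 𝒪 L] [Module.Free 𝒪 L]
    {d : ℕ} {x : Fin d → L}
    (hx : ∀ c : Fin d → 𝒪, (∑ i, c i • x i) ∈ (𝔪 • ⊤ : Submodule 𝒪 L) → ∀ i, c i ∈ 𝔪)
    {a : 𝒪} (ha : a ≠ 0) {l : L} (hl : a • l ∈ span 𝒪 (Set.range x)) :
    l ∈ span 𝒪 (Set.range x) := by
  obtain ⟨ϖ, hϖ⟩ := IsDiscreteValuationRing.exists_irreducible 𝒪
  have hmax : (𝔪 : Ideal 𝒪) = Ideal.span {ϖ} :=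
    (IsDiscreteValuationRing.irreducible_iff_uniformizer ϖ).mp hϖ
  have hϖm : ϖ ∈ (𝔪 : Ideal 𝒪) := hmax ▸ Ideal.mem_span_singleton_self ϖ
  have hϖ0 : ϖ ≠ 0 := hϖ.ne_zero
  -- key step for a single ϖ
  have step : ∀ l : L, ϖ • l ∈ span 𝒪 (Set.range x) → l ∈ span 𝒪 (Set.range x) := by
    intro l hl
    rw [mem_span_range_iff_exists_fun] at hl
    obtain ⟨c, hc⟩ := hl
    have hcm : ∀ i, c i ∈ (𝔪 : Ideal 𝒪) := by
      refine hx c ?_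
      rw [hc]
      exact smul_mem_smul hϖm mem_top
    choose dd hdd using fun i => Ideal.mem_span_singleton'.mp (hmax ▸ hcm i)
    have hkey : ϖ • (l - ∑ i, dd i • x i) = 0 := by
      rw [smul_sub, Finset.smul_sum, sub_eq_zero, ← hc]
      refine Finset.sum_congr rfl fun i _ => ?_
      rw [smul_smul, mul_comm, hdd i]
    have hzero : l - ∑ i, dd i • x i = 0 := by
      rcases smul_eq_zero.mp hkey with h | h
      · exact absurd h hϖ0
      · exact h
    rw [sub_eq_zero] at hzero
    rw [hzero]
    exact sum_mem fun i _ => smul_mem _ _ (subset_span ⟨i, rfl⟩)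
  obtain ⟨n, u, rfl⟩ := IsDiscreteValuationRing.eq_unit_mul_pow_irreducible ha hϖ
  have hpow : (ϖ ^ n : 𝒪) • l ∈ span 𝒪 (Set.range x) := by
    have := Submodule.smul_mem (span 𝒪 (Set.range x)) ((u⁻¹ : 𝒪ˣ) : 𝒪) hl
    rwa [smul_smul, ← mul_assoc, Units.inv_mul, one_mul] at this
  clear hl ha
  induction n with
  | zero => simpa using hpow
  | succ n ih =>
    refine ih (step _ ?_)
    have hps : ϖ ^ (n + 1) = ϖ * ϖ ^ n := by ring
    rw [smul_smul, ← hps]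
    exact hpow

end Aux
section Adapted

variable {𝒪 : Type} [CommRing 𝒪] [IsDomain 𝒪] [IsDiscreteValuationRing 𝒪]

local notation "𝔪" => IsLocalRing.maximalIdeal 𝒪

/-- Given a generating family `ν` of `N` that is independent mod `𝔪`, every surjection from a
finite free module `L` onto `N` admits a basis adapted to `ν`. -/
lemma exists_adapted_basis {N : Type} [AddCommGroup N] [Module 𝒪 N]
    {d : ℕ} {ν : Fin d → N} (hspan : span 𝒪 (Set.range ν) = ⊤)
    (hν : ∀ c : Fin d → 𝒪, (∑ i, c i • ν i) ∈ (𝔪 • ⊤ : Submodule 𝒪 N) → ∀ i, c i ∈ 𝔪)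
    (L : Type) [AddCommGroup L] [Module 𝒪 L] [Module.Free 𝒪 L] [Module.Finite 𝒪 L]
    (f : L →ₗ[𝒪] N) (hf : Function.Surjective f) :
    ∃ (q : ℕ) (b : Basis (Fin d ⊕ Fin q) 𝒪 L),
      Module.finrank 𝒪 L = d + q ∧ (∀ i, f (b (Sum.inl i)) = ν i) ∧
        (∀ j, f (b (Sum.inr j)) = 0) := by
  classical
  -- lift ν to L
  set x : Fin d → L := fun i => Function.surjInv hf (ν i) with hxdef
  have hfx : ∀ i, f (x i) = ν i := fun i => Function.surjInv_eq hf (ν i)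
  -- x is independent mod 𝔪
  have hx : ∀ c : Fin d → 𝒪, (∑ i, c i • x i) ∈ (𝔪 • ⊤ : Submodule 𝒪 L) → ∀ i, c i ∈ 𝔪 := by
    intro c hc
    refine hν c ?_
    have : f (∑ i, c i • x i) ∈ (𝔪 • ⊤ : Submodule 𝒪 N) := by
      have h1 : f (∑ i, c i • x i) ∈ Submodule.map f (𝔪 • ⊤) := Submodule.mem_map_of_mem hc
      rw [Submodule.map_smul''] at h1
      exact Submodule.smul_mono le_rfl le_top h1
    simpa only [map_sum, map_smul, hfx] using this
  set L₁ : Submodule 𝒪 L := span 𝒪 (Set.range x) with hL₁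
  -- the quotient is torsion-free, hence free
  haveI : NoZeroSMulDivisors 𝒪 (L ⧸ L₁) := by
    refine ⟨fun {a} {q} h => ?_⟩
    by_cases ha : a = 0
    · exact Or.inl ha
    refine Or.inr ?_
    obtain ⟨l, rfl⟩ := Submodule.Quotient.mk_surjective L₁ q
    rw [← Submodule.Quotient.mk_smul, Submodule.Quotient.mk_eq_zero] at h
    rw [Submodule.Quotient.mk_eq_zero]
    exact aux_saturated hx ha h
  haveI : Module.Free 𝒪 (L ⧸ L₁) := inferInstance
  set q : ℕ := Module.finrank 𝒪 (L ⧸ L₁) with hqdef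
  set bQ : Basis (Fin q) 𝒪 (L ⧸ L₁) := Module.finBasis 𝒪 (L ⧸ L₁) with hbQ
  -- a section of the quotient map
  obtain ⟨s, hs⟩ := Module.projective_lifting_property L₁.mkQ (LinearMap.id)
    (Submodule.mkQ_surjective L₁)
  have hsec : ∀ z : L ⧸ L₁, L₁.mkQ (s z) = z := fun z => by
    have := LinearMap.ext_iff.mp hs z
    simpa using this
  set y : Fin q → L := fun j => s (bQ j) with hydef
  -- correction coefficients
  have hmem : ∀ j, f (y j) ∈ span 𝒪 (Set.range ν) := fun j => by rw [hspan]; trivial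
  choose cf hcf using fun j => mem_span_range_iff_exists_fun 𝒪 |>.mp (hmem j)
  set w : Fin d ⊕ Fin q → L := Sum.elim x (fun j => y j - ∑ i, cf j i • x i) with hwdef
  have hwinl : ∀ i, w (Sum.inl i) = x i := fun i => rfl
  have hwinr : ∀ j, w (Sum.inr j) = y j - ∑ i, cf j i • x i := fun j => rfl
  have hxL₁ : ∀ i, x i ∈ L₁ := fun i => subset_span ⟨i, rfl⟩
  have hmkw : ∀ j, L₁.mkQ (w (Sum.inr j)) = bQ j := by
    intro j
    rw [hwinr, map_sub]
    have h2 : L₁.mkQ (∑ i, cf j i • x i) = 0 := by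
      rw [Submodule.mkQ_apply, Submodule.Quotient.mk_eq_zero]
      exact sum_mem fun i _ => smul_mem _ _ (hxL₁ i)
    rw [h2, sub_zero, hydef]
    exact hsec (bQ j)
  -- linear independence
  have hli : LinearIndependent 𝒪 w := by
    rw [Fintype.linearIndependent_iff]
    intro c hc
    have hc' : (∑ i, c (Sum.inl i) • w (Sum.inl i)) + (∑ j, c (Sum.inr j) • w (Sum.inr j)) = 0 := by
      rw [← hc, Fintype.sum_sum_type]
    -- apply mkQ
    have hq0 : ∀ j, c (Sum.inr j) = 0 := by
      have h3 := congrArg L₁.mkQ hc'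
      simp only [map_add, map_sum, map_smul, map_zero] at h3
      have h4 : ∀ i, L₁.mkQ (w (Sum.inl i)) = 0 := fun i => by
        rw [Submodule.mkQ_apply, Submodule.Quotient.mk_eq_zero]; exact hxL₁ i
      simp only [hmkw, h4, smul_zero, Finset.sum_const_zero, zero_add] at h3
      exact Fintype.linearIndependent_iff.mp bQ.linearIndependent _ h3
    have hx0 : (∑ i, c (Sum.inl i) • x i) = 0 := by
      have := hc'
      simp only [hq0, zero_smul, Finset.sum_const_zero, add_zero] at this
      simpa only [hwinl] using this
    have hl0 := Fintype.linearIndependent_iff.mp (aux_linearIndependent hx) _ hx0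
    intro i
    cases i with
    | inl i => exact hl0 i
    | inr j => exact hq0 j
  -- spanning
  have hsp : ⊤ ≤ span 𝒪 (Set.range w) := by
    intro l _
    have hbQtop : L₁.mkQ l ∈ span 𝒪 (Set.range bQ) := by rw [bQ.span_eq]; trivial
    obtain ⟨a, ha⟩ := mem_span_range_iff_exists_fun 𝒪 |>.mp hbQtop
    have hyW : ∀ j, y j ∈ span 𝒪 (Set.range w) := by
      intro j
      have : y j = w (Sum.inr j) + ∑ i, cf j i • x i := by rw [hwinr]; abel
      rw [this]
      exact add_mem (subset_span ⟨Sum.inr j, rfl⟩)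
        (sum_mem fun i _ => smul_mem _ _ (subset_span ⟨Sum.inl i, rfl⟩))
    have hL₁W : L₁ ≤ span 𝒪 (Set.range w) := by
      rw [hL₁]
      refine span_le.mpr ?_
      rintro _ ⟨i, rfl⟩
      exact subset_span ⟨Sum.inl i, rfl⟩
    have hdiff : l - ∑ j, a j • y j ∈ L₁ := by
      rw [← Submodule.Quotient.mk_eq_zero, ← Submodule.mkQ_apply, map_sub, map_sum]
      simp only [map_smul, hydef]
      simp only [hsec]
      rw [ha]
      simp
    have : l = (l - ∑ j, a j • y j) + ∑ j, a j • y j := by abel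
    rw [this]
    exact add_mem (hL₁W hdiff) (sum_mem fun j _ => smul_mem _ _ (hyW j))
  set b : Basis (Fin d ⊕ Fin q) 𝒪 L := Basis.mk hli hsp with hbdef
  refine ⟨q, b, ?_, ?_, ?_⟩
  · rw [Module.finrank_eq_card_basis b, Fintype.card_sum, Fintype.card_fin, Fintype.card_fin]
  · intro i
    rw [hbdef, Basis.mk_apply]
    exact hfx i
  · intro j
    rw [hbdef, Basis.mk_apply, hwinr, map_sub, map_sum]
    simp only [map_smul, hfx]
    rw [hcf j, sub_self]

end Adapted
/-- Over a DVR `𝒪`, given a finite-length module `N`, finitely generated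
free modules `L`, `L'` of the same rank and surjections `f : L ↠ N`, `f' : L' ↠ N`,
there is an isomorphism `α : L ≅ L'` with `f = f' ∘ α`. -/
theorem exists_linearEquiv_comp_of_surjective
    (𝒪 : Type) [CommRing 𝒪] [IsDomain 𝒪] [IsDiscreteValuationRing 𝒪]
    (N : Type) [AddCommGroup N] [Module 𝒪 N] (hN : IsFiniteLength 𝒪 N)
    (L L' : Type) [AddCommGroup L] [Module 𝒪 L] [AddCommGroup L'] [Module 𝒪 L']
    [Module.Free 𝒪 L] [Module.Finite 𝒪 L] [Module.Free 𝒪 L'] [Module.Finite 𝒪 L']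
    (hrank : Module.finrank 𝒪 L = Module.finrank 𝒪 L')
    (f : L →ₗ[𝒪] N) (f' : L' →ₗ[𝒪] N)
    (hf : Function.Surjective f) (hf' : Function.Surjective f') :
    ∃ α : L ≃ₗ[𝒪] L', f = f'.comp α.toLinearMap := by
  classical
  haveI : IsNoetherian 𝒪 N := (isFiniteLength_iff_isNoetherian_isArtinian.mp hN).1
  haveI : Module.Finite 𝒪 N := ⟨IsNoetherian.noetherian ⊤⟩
  set 𝔪 : Ideal 𝒪 := IsLocalRing.maximalIdeal 𝒪 with h𝔪
  set k := 𝒪 ⧸ 𝔪 with hk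
  letI : Field k := Ideal.Quotient.field 𝔪
  set NN := N ⧸ (𝔪 • ⊤ : Submodule 𝒪 N) with hNN
  haveI : Module.Finite k NN := Module.Finite.of_restrictScalars_finite 𝒪 k NN
  set d : ℕ := Module.finrank k NN with hd
  set c : Basis (Fin d) k NN := Module.finBasis k NN with hc
  have hmksurj := Submodule.Quotient.mk_surjective (𝔪 • ⊤ : Submodule 𝒪 N)
  set ν : Fin d → N := fun i => Function.surjInv hmksurj (c i) with hν
  have hmkν : ∀ i, Submodule.Quotient.mk (p := (𝔪 • ⊤ : Submodule 𝒪 N)) (ν i) = c i :=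
    fun i => Function.surjInv_eq hmksurj (c i)
  -- ν spans N
  have hspan : span 𝒪 (Set.range ν) = ⊤ := by
    rw [eq_top_iff]
    refine Submodule.le_of_le_smul_of_le_jacobson_bot (Module.Finite.fg_top (R := 𝒪) (M := N))
      (IsLocalRing.maximalIdeal_le_jacobson ⊥) ?_
    intro n _
    have hcn : Submodule.Quotient.mk (p := (𝔪 • ⊤ : Submodule 𝒪 N)) n ∈
        span k (Set.range c) := by rw [c.span_eq]; trivial
    obtain ⟨a, ha⟩ := (mem_span_range_iff_exists_fun k).mp hcn
    choose abar habar using fun i => Ideal.Quotient.mk_surjective (I := 𝔪) (a i)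
    have hmk : Submodule.Quotient.mk (p := (𝔪 • ⊤ : Submodule 𝒪 N)) (∑ i, abar i • ν i) =
        Submodule.Quotient.mk (p := (𝔪 • ⊤ : Submodule 𝒪 N)) n := by
      rw [← (𝔪 • ⊤ : Submodule 𝒪 N).mkQ_apply, map_sum]
      simp only [map_smul, Submodule.mkQ_apply]
      rw [← ha]
      refine Finset.sum_congr rfl fun i _ => ?_
      rw [← habar i, ← hmkν i]
      exact (Module.Quotient.mk_smul_mk N 𝔪 (abar i) (ν i)).symm
    rw [Submodule.mem_sup]
    refine ⟨∑ i, abar i • ν i, ?_, n - ∑ i, abar i • ν i, ?_, by abel⟩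
    · exact Submodule.sum_mem _ fun i _ => Submodule.smul_mem _ _ (Submodule.subset_span ⟨i, rfl⟩)
    · rw [← Submodule.Quotient.mk_eq_zero, Submodule.Quotient.mk_sub, hmk, sub_self]
  -- ν is independent mod 𝔪
  have hνind : ∀ cc : Fin d → 𝒪, (∑ i, cc i • ν i) ∈ (𝔪 • ⊤ : Submodule 𝒪 N) →
      ∀ i, cc i ∈ 𝔪 := by
    intro cc hcc i
    have h0 : (∑ i, (Ideal.Quotient.mk 𝔪 (cc i)) • c i) = (0 : NN) := by
      have := (Submodule.Quotient.mk_eq_zero (𝔪 • ⊤ : Submodule 𝒪 N)).mpr hcc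
      rw [← (𝔪 • ⊤ : Submodule 𝒪 N).mkQ_apply, map_sum] at this
      rw [← this]
      refine Finset.sum_congr rfl fun i _ => ?_
      rw [Submodule.mkQ_apply, ← hmkν i]
      exact Module.Quotient.mk_smul_mk N 𝔪 (cc i) (ν i)
    have := Fintype.linearIndependent_iff.mp c.linearIndependent _ h0 i
    exact (Ideal.Quotient.eq_zero_iff_mem).mp this
  obtain ⟨q, b, hq, hb1, hb2⟩ := exists_adapted_basis hspan hνind L f hf
  obtain ⟨q', b', hq', hb1', hb2'⟩ := exists_adapted_basis hspan hνind L' f' hf'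
  have hqq : q = q' := by omega
  set e : Fin d ⊕ Fin q ≃ Fin d ⊕ Fin q' := Equiv.sumCongr (Equiv.refl _) (finCongr hqq) with he
  refine ⟨b.equiv b' e, ?_⟩
  refine b.ext fun i => ?_
  rw [LinearMap.comp_apply, LinearEquiv.coe_coe, Basis.equiv_apply]
  cases i with
  | inl i => rw [hb1 i, he]; simp only [Equiv.sumCongr_apply, Equiv.coe_refl, Sum.map_inl, id_eq]
             rw [hb1' i]
  | inr j => rw [hb2 j, he]; simp only [Equiv.sumCongr_apply, Equiv.coe_refl, Sum.map_inr]
             rw [hb2' (finCongr hqq j)]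
end

section
/- Let $\mathfrak{o}$ be a discrete valuation ring, $N$ a finite-length $\mathfrak{o}$-module generated by $n$ elements $x_1, \ldots, x_n$. Then for any free $\mathfrak{o}$-module $L$ of rank $n$ and any surjective homomorphism $f: L \to N$, there exists an $\mathfrak{o}$-basis $y_1, \ldots, y_n$ of $L$ with $f(y_i) = x_i$ for all $i$. -/
open Submodule Function

variable {𝒪 : Type} [CommRing 𝒪]

section helpers
/-- `Fin.cons 0 ·` as a linear map. -/
def consZeroL (n : ℕ) : (Fin n → 𝒪) →ₗ[𝒪] (Fin (n + 1) → 𝒪) where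
  toFun t := Fin.cons 0 t
  map_add' a b := by funext k; refine Fin.cases ?_ (fun j => ?_) k <;> simp
  map_smul' c a := by funext k; refine Fin.cases ?_ (fun j => ?_) k <;> simp

@[simp] lemma consZeroL_apply {n : ℕ} (t : Fin n → 𝒪) : consZeroL n t = Fin.cons 0 t := rfl

lemma decomp {n : ℕ} (w : Fin (n + 1) → 𝒪) :
    w = w 0 • (Pi.single 0 1 : Fin (n+1) → 𝒪) + Fin.cons 0 (Fin.tail w) := by
  funext k
  refine Fin.cases ?_ (fun j => ?_) k
  · simp
  · simp [Pi.single_eq_of_ne (Fin.succ_ne_zero j), Fin.tail]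

lemma cons_decomp {n : ℕ} (r : 𝒪) (t : Fin n → 𝒪) :
    (Fin.cons r t : Fin (n+1) → 𝒪) = r • (Pi.single 0 1 : Fin (n+1) → 𝒪) + Fin.cons (0 : 𝒪) t := by
  have := decomp (Fin.cons r t)
  simpa using this

lemma single_succ_eq {n : ℕ} (i : Fin n) :
    (Pi.single i.succ 1 : Fin (n+1) → 𝒪) = Fin.cons 0 (Pi.single i 1) := by
  funext k
  refine Fin.cases ?_ (fun j => ?_) k
  · simp [Pi.single_eq_of_ne (Fin.succ_ne_zero i).symm]
  · simp [Pi.single_apply, Fin.succ_inj]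

lemma eq_top_of_single_zero_of_consZero {n : ℕ} (p : Submodule 𝒪 (Fin (n+1) → 𝒪))
    (h1 : (Pi.single 0 1 : Fin (n+1) → 𝒪) ∈ p)
    (h2 : ∀ s : Fin n → 𝒪, Fin.cons 0 s ∈ p) : p = ⊤ := by
  rw [eq_top_iff]
  intro w _
  rw [decomp w]
  exact p.add_mem (p.smul_mem _ h1) (h2 _)

lemma consZero_mem {n : ℕ} (p : Submodule 𝒪 (Fin (n+1) → 𝒪))
    (t : Fin n → (Fin n → 𝒪)) (ht : Submodule.span 𝒪 (Set.range t) = ⊤)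
    (h : ∀ i, Fin.cons 0 (t i) ∈ p) (s : Fin n → 𝒪) : Fin.cons (0:𝒪) s ∈ p := by
  have hs : s ∈ Submodule.span 𝒪 (Set.range t) := by rw [ht]; trivial
  obtain ⟨d, hd⟩ := (mem_span_range_iff_exists_fun 𝒪).mp hs
  have : (Fin.cons 0 s : Fin (n+1) → 𝒪) = ∑ i, d i • (Fin.cons (0:𝒪) (t i) : Fin (n+1) → 𝒪) := by
    calc (Fin.cons 0 s : Fin (n+1) → 𝒪) = consZeroL n s := rfl
    _ = consZeroL n (∑ i, d i • t i) := by rw [hd]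
    _ = ∑ i, d i • (Fin.cons (0:𝒪) (t i) : Fin (n+1) → 𝒪) := by rw [map_sum]; simp
  rw [this]
  exact Submodule.sum_mem _ fun i _ => p.smul_mem _ (h i)

lemma single_span {n : ℕ} :
    Submodule.span 𝒪 (Set.range fun i : Fin n => (Pi.single i 1 : Fin n → 𝒪)) = ⊤ := by
  have : (fun i : Fin n => (Pi.single i 1 : Fin n → 𝒪)) = ⇑(Pi.basisFun 𝒪 (Fin n)) := by
    funext i; simp
  rw [this, Module.Basis.span_eq]

lemma spanD {n : ℕ} (z : Fin (n+1) → 𝒪) (hz : IsUnit (z 0)) :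
    Submodule.span 𝒪 (Set.range
      (Fin.cons z (fun i => Pi.single i.succ 1) : Fin (n+1) → (Fin (n+1) → 𝒪))) = ⊤ := by
  set v : Fin (n+1) → (Fin (n+1) → 𝒪) := Fin.cons z (fun i => Pi.single i.succ 1) with hv
  set p := Submodule.span 𝒪 (Set.range v) with hp
  have hmem : ∀ k, v k ∈ p := fun k => Submodule.subset_span ⟨k, rfl⟩
  have hcons : ∀ s : Fin n → 𝒪, Fin.cons (0:𝒪) s ∈ p := by
    refine consZero_mem p _ single_span (fun i => ?_)
    have : (Fin.cons 0 (Pi.single i 1) : Fin (n+1) → 𝒪) = v i.succ := by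
      rw [hv, Fin.cons_succ, single_succ_eq]
    rw [this]; exact hmem i.succ
  have h1 : (Pi.single 0 1 : Fin (n+1) → 𝒪) ∈ p := by
    obtain ⟨u, hu⟩ := hz
    have hzz : z 0 • (Pi.single 0 1 : Fin (n+1) → 𝒪) = z - Fin.cons 0 (Fin.tail z) := by
      rw [eq_sub_iff_add_eq]; exact (decomp z).symm
    have : z 0 • (Pi.single 0 1 : Fin (n+1) → 𝒪) ∈ p := by
      rw [hzz]
      exact p.sub_mem (by simpa [hv] using hmem 0) (hcons _)
    have := p.smul_mem ((u⁻¹ : 𝒪ˣ) : 𝒪) this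
    rwa [smul_smul, ← hu, Units.inv_mul, one_smul] at this
  exact eq_top_of_single_zero_of_consZero p h1 hcons

lemma spanC {n : ℕ} (r : Fin n → 𝒪) (t : Fin n → (Fin n → 𝒪))
    (ht : Submodule.span 𝒪 (Set.range t) = ⊤) :
    Submodule.span 𝒪 (Set.range
      (Fin.cons (Pi.single 0 1) (fun i => Fin.cons (r i) (t i))
        : Fin (n+1) → (Fin (n+1) → 𝒪))) = ⊤ := by
  set v : Fin (n+1) → (Fin (n+1) → 𝒪) :=
    Fin.cons (Pi.single 0 1) (fun i => Fin.cons (r i) (t i)) with hv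
  set p := Submodule.span 𝒪 (Set.range v) with hp
  have hmem : ∀ k, v k ∈ p := fun k => Submodule.subset_span ⟨k, rfl⟩
  have h1 : (Pi.single 0 1 : Fin (n+1) → 𝒪) ∈ p := by simpa [hv] using hmem 0
  refine eq_top_of_single_zero_of_consZero p h1 ?_
  refine consZero_mem p t ht (fun i => ?_)
  have hvs : v i.succ = Fin.cons (r i) (t i) := by rw [hv, Fin.cons_succ]
  have : (Fin.cons 0 (t i) : Fin (n+1) → 𝒪)
      = v i.succ - r i • (Pi.single 0 1 : Fin (n+1) → 𝒪) := by
    rw [hvs, eq_sub_iff_add_eq]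
    exact (add_comm _ _).trans (cons_decomp _ _).symm
  rw [this]
  exact p.sub_mem (hmem i.succ) (p.smul_mem _ h1)
end helpers

section dvr
variable [IsDomain 𝒪] [IsDiscreteValuationRing 𝒪]

lemma spanning_is_basis {m : ℕ} (v : Fin m → (Fin m → 𝒪))
    (hv : Submodule.span 𝒪 (Set.range v) = ⊤) :
    ∃ b : Module.Basis (Fin m) 𝒪 (Fin m → 𝒪), ∀ i, b i = v i := by
  set φ : (Fin m → 𝒪) →ₗ[𝒪] (Fin m → 𝒪) := Fintype.linearCombination 𝒪 v with hφ
  have hsurj : Function.Surjective φ := by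
    rw [← LinearMap.range_eq_top, hφ, Fintype.range_linearCombination, hv]
  have hinj : Function.Injective φ :=
    OrzechProperty.injective_of_surjective_endomorphism φ hsurj
  refine ⟨(Pi.basisFun 𝒪 (Fin m)).map (LinearEquiv.ofBijective φ ⟨hinj, hsurj⟩), fun i => ?_⟩
  simp [hφ]

lemma aux :
    ∀ (n : ℕ) (N : Type) [AddCommGroup N] [Module 𝒪 N]
      (x : Fin n → N), Submodule.span 𝒪 (Set.range x) = ⊤ →
      ∀ (f : (Fin n → 𝒪) →ₗ[𝒪] N), Function.Surjective f →
      ∃ y : Module.Basis (Fin n) 𝒪 (Fin n → 𝒪), ∀ i, f (y i) = x i := by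
  intro n
  induction n with
  | zero =>
    intro N _ _ x hx f hf
    exact ⟨Pi.basisFun 𝒪 (Fin 0), fun i => i.elim0⟩
  | succ n ih =>
    intro N _ _ x hx f hf
    by_cases hsub : Subsingleton N
    · exact ⟨Pi.basisFun 𝒪 (Fin (n+1)), fun i => Subsingleton.elim _ _⟩
    have hNt : Nontrivial N := not_subsingleton_iff_nontrivial.mp hsub
    set m : Ideal 𝒪 := IsLocalRing.maximalIdeal 𝒪 with hm
    -- there is a generator outside `m • N`
    have hex : ∃ i, x i ∉ (m • ⊤ : Submodule 𝒪 N) := by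
      by_contra h
      push_neg at h
      have hle : (⊤ : Submodule 𝒪 N) ≤ m • ⊤ := by
        have h2 : Submodule.span 𝒪 (Set.range x) ≤ m • ⊤ :=
          Submodule.span_le.mpr (by rintro _ ⟨i, rfl⟩; exact h i)
        rwa [hx] at h2
      have hfg : (⊤ : Submodule 𝒪 N).FG :=
        Submodule.fg_def.mpr ⟨Set.range x, Set.finite_range x, hx⟩
      have hbot := Submodule.eq_bot_of_le_smul_of_le_jacobson_bot m ⊤ hfg hle
        (IsLocalRing.maximalIdeal_le_jacobson ⊥)
      obtain ⟨a, ha⟩ := exists_ne (0 : N)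
      exact ha ((Submodule.mem_bot 𝒪).mp (hbot ▸ Submodule.mem_top (x := a)))
    obtain ⟨i0, hi0⟩ := hex
    set e : Equiv.Perm (Fin (n+1)) := Equiv.swap 0 i0 with he
    suffices h : ∃ y : Module.Basis (Fin (n+1)) 𝒪 (Fin (n+1) → 𝒪), ∀ i, f (y i) = x (e i) by
      obtain ⟨y, hy⟩ := h
      refine ⟨y.reindex e, fun i => ?_⟩
      rw [Module.Basis.reindex_apply, hy, Equiv.apply_symm_apply]
    set x' : Fin (n+1) → N := x ∘ e with hx'def
    have hx' : Submodule.span 𝒪 (Set.range x') = ⊤ := by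
      rw [hx'def, Set.range_comp, Equiv.range_eq_univ, Set.image_univ, hx]
    have hx'0 : x' 0 ∉ (m • ⊤ : Submodule 𝒪 N) := by
      simpa [hx'def, he, Equiv.swap_apply_left] using hi0
    -- lift `x' 0` to a vector `z`, necessarily having a unit coordinate
    obtain ⟨z, hz⟩ := hf (x' 0)
    have hzm : z ∉ (m • ⊤ : Submodule 𝒪 (Fin (n+1) → 𝒪)) := by
      intro hmem
      apply hx'0
      have : f z ∈ Submodule.map f (m • ⊤) := Submodule.mem_map_of_mem hmem
      rw [Submodule.map_smul'', Submodule.map_top, LinearMap.range_eq_top.mpr hf] at this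
      rwa [hz] at this
    have hunit : ∃ j, IsUnit (z j) := by
      by_contra h
      push_neg at h
      apply hzm
      have hcoord : ∀ j, z j ∈ m := fun j =>
        (IsLocalRing.mem_maximalIdeal (z j)).mpr (mem_nonunits_iff.mpr (h j))
      have hrepr : z = ∑ j, z j • (Pi.single j 1 : Fin (n+1) → 𝒪) := by
        funext k
        simp [Pi.single_apply]
      rw [hrepr]
      exact Submodule.sum_mem _ fun j _ =>
        Submodule.smul_mem_smul (hcoord j) Submodule.mem_top
    obtain ⟨j, hj⟩ := hunit
    -- a basis of `𝒪^(n+1)` whose 0-th vector is `z`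
    have hB : ∃ B : Module.Basis (Fin (n+1)) 𝒪 (Fin (n+1) → 𝒪), B 0 = z := by
      set τ : Equiv.Perm (Fin (n+1)) := Equiv.swap 0 j with hτ
      set z' : Fin (n+1) → 𝒪 := z ∘ τ with hz'
      have hz'0 : IsUnit (z' 0) := by simpa [hz', hτ, Equiv.swap_apply_left] using hj
      obtain ⟨b', hb'⟩ := spanning_is_basis _ (spanD z' hz'0)
      set Q : (Fin (n+1) → 𝒪) ≃ₗ[𝒪] (Fin (n+1) → 𝒪) := LinearEquiv.funCongrLeft 𝒪 𝒪 τ with hQ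
      refine ⟨b'.map Q, ?_⟩
      rw [Module.Basis.map_apply, hb' 0, Fin.cons_zero]
      funext k
      simp [hQ, hz', hτ, LinearMap.funLeft, Equiv.swap_apply_self]
    obtain ⟨B, hB0⟩ := hB
    set Φ : (Fin (n+1) → 𝒪) ≃ₗ[𝒪] (Fin (n+1) → 𝒪) := B.equivFun.symm with hΦ
    have hΦsingle : ∀ k, Φ (Pi.single k 1) = B k := by
      intro k
      rw [hΦ, Module.Basis.equivFun_symm_apply]
      rw [Finset.sum_eq_single k]
      · simp
      · intro b _ hb
        rw [Pi.single_eq_of_ne hb, zero_smul]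
      · intro hk; exact absurd (Finset.mem_univ k) hk
    have hΦz : Φ (Pi.single 0 1) = z := by rw [hΦsingle 0, hB0]
    -- the quotient by `x' 0`
    set S : Submodule 𝒪 N := Submodule.span 𝒪 {x' 0} with hS
    set g : (Fin n → 𝒪) →ₗ[𝒪] (N ⧸ S) :=
      S.mkQ ∘ₗ f ∘ₗ Φ.toLinearMap ∘ₗ consZeroL n with hg
    have hgapp : ∀ t : Fin n → 𝒪, g t = S.mkQ (f (Φ (Fin.cons 0 t))) := fun t => rfl
    have hkey : ∀ d : Fin (n+1) → 𝒪,
        S.mkQ (f (Φ d)) = g (Fin.tail d) := by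
      intro d
      rw [hgapp]
      rw [Submodule.mkQ_apply, Submodule.mkQ_apply, Submodule.Quotient.eq]
      have hd : f (Φ d) - f (Φ (Fin.cons 0 (Fin.tail d))) = d 0 • x' 0 := by
        rw [← map_sub, ← map_sub]
        have : d - Fin.cons 0 (Fin.tail d) = d 0 • (Pi.single 0 1 : Fin (n+1) → 𝒪) := by
          rw [sub_eq_iff_eq_add]; exact decomp d
        rw [this, map_smul, map_smul, hΦz, hz]
      rw [hd]
      exact Submodule.smul_mem _ _ (Submodule.mem_span_singleton_self _)
    have hgsurj : Function.Surjective g := by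
      intro q
      obtain ⟨nn, rfl⟩ := S.mkQ_surjective q
      obtain ⟨l, hl⟩ := hf nn
      refine ⟨Fin.tail (Φ.symm l), ?_⟩
      rw [← hkey, LinearEquiv.apply_symm_apply, hl]
    set x₁ : Fin n → (N ⧸ S) := fun i => S.mkQ (x' i.succ) with hx₁def
    have hx₁ : Submodule.span 𝒪 (Set.range x₁) = ⊤ := by
      have h1 : Submodule.span 𝒪 (S.mkQ '' Set.range x') = ⊤ := by
        rw [← Submodule.map_span, hx', Submodule.map_top, Submodule.range_mkQ]
      rw [eq_top_iff, ← h1]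
      refine Submodule.span_le.mpr ?_
      rintro _ ⟨_, ⟨i, rfl⟩, rfl⟩
      refine Fin.cases ?_ (fun i => ?_) i
      · have : x' 0 ∈ S := Submodule.mem_span_singleton_self _
        rw [show S.mkQ (x' 0) = 0 from (Submodule.Quotient.mk_eq_zero S).mpr this]
        exact Submodule.zero_mem _
      · exact Submodule.subset_span ⟨i, rfl⟩
    obtain ⟨y₁, hy₁⟩ := ih (N ⧸ S) x₁ hx₁ g hgsurj
    -- correct the lifts of `x' i.succ`
    have hc : ∀ i, ∃ c : 𝒪, f (Φ (Fin.cons 0 (y₁ i))) - x' i.succ = c • x' 0 := by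
      intro i
      have h1 : S.mkQ (f (Φ (Fin.cons 0 (y₁ i)))) = S.mkQ (x' i.succ) := by
        rw [← hgapp, hy₁]
      rw [Submodule.mkQ_apply, Submodule.mkQ_apply] at h1
      have h2 := (Submodule.Quotient.eq S).mp h1
      obtain ⟨c, hc⟩ := Submodule.mem_span_singleton.mp h2
      exact ⟨c, hc.symm⟩
    choose c hcc using hc
    set v : Fin (n+1) → (Fin (n+1) → 𝒪) :=
      Fin.cons (Pi.single 0 1) (fun i => Fin.cons (-(c i)) (y₁ i)) with hv
    have hvspan : Submodule.span 𝒪 (Set.range v) = ⊤ :=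
      spanC (fun i => -(c i)) (⇑y₁) y₁.span_eq
    obtain ⟨b2, hb2⟩ := spanning_is_basis v hvspan
    refine ⟨b2.map Φ, fun k => ?_⟩
    rw [Module.Basis.map_apply, hb2]
    refine Fin.cases ?_ (fun i => ?_) k
    · rw [hv, Fin.cons_zero, hΦz, hz]; rfl
    · rw [hv, Fin.cons_succ]
      have hsplit : (Fin.cons (-(c i)) (y₁ i) : Fin (n+1) → 𝒪)
          = Fin.cons 0 (y₁ i) - c i • (Pi.single 0 1 : Fin (n+1) → 𝒪) := by
        rw [cons_decomp, neg_smul, sub_eq_neg_add]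
      rw [hsplit, map_sub, map_sub, map_smul, map_smul, hΦz, hz]
      have := hcc i
      rw [sub_eq_iff_eq_add] at this
      rw [this]
      abel
end dvr

/-- Over a DVR `𝒪`, let `N` be a finite-length module generated by the
`n` elements `x 0, …, x (n-1)`.  For any free module `L` of rank `n` and any surjection
`f : L ↠ N`, there is a basis `y` of `L` with `f (y i) = x i` for all `i`. -/
theorem exists_basis_lifting_generators
    (𝒪 : Type) [CommRing 𝒪] [IsDomain 𝒪] [IsDiscreteValuationRing 𝒪]
    (N : Type) [AddCommGroup N] [Module 𝒪 N] (hN : IsFiniteLength 𝒪 N)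
    {n : ℕ} (x : Fin n → N) (hx : Submodule.span 𝒪 (Set.range x) = ⊤)
    (L : Type) [AddCommGroup L] [Module 𝒪 L] [Module.Free 𝒪 L] [Module.Finite 𝒪 L]
    (hrank : Module.finrank 𝒪 L = n)
    (f : L →ₗ[𝒪] N) (hf : Function.Surjective f) :
    ∃ y : Module.Basis (Fin n) 𝒪 L, ∀ i, f (y i) = x i := by
  have b : Module.Basis (Fin n) 𝒪 L := (Module.finBasis 𝒪 L).reindex (finCongr hrank)
  set E : (Fin n → 𝒪) ≃ₗ[𝒪] L := b.equivFun.symm with hE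
  have hsurj : Function.Surjective (f ∘ₗ E.toLinearMap) := by
    intro a
    obtain ⟨l, hl⟩ := hf a
    exact ⟨E.symm l, by simp [hl]⟩
  obtain ⟨y, hy⟩ := aux n N x hx (f ∘ₗ E.toLinearMap) hsurj
  refine ⟨y.map E, fun i => ?_⟩
  rw [Module.Basis.map_apply]
  exact hy i
end

section
/- Let $R = \mathbb{Z}[x_1, x_2, \ldots]$ be the polynomial ring in countably many variables graded by $\deg x_m = m$, let $I_{n-1}$ be the ideal of elements all of whose homogeneous components have degree at least $n-1$, and for $m \geq 0$ set $y_m = 1 + x_1 + \cdots + x_m$. Then for every $n \geq 1$, the element $f_n = \sum_{r=1}^n (-1)^{n-r} \sum_{0 = n_0 < n_1 < \cdots < n_r = n} y_{n_1 - n_0} y_{n_2 - n_1} \cdots y_{n_r - n_{r-1}}$ belongs to $I_{n-1}$. -/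
open MvPolynomial

/-- `y m = 1 + x₁ + ⋯ + x_m`, where the variable `x_{i+1}` is `X i` (so `deg X i = i+1`). -/
noncomputable def yElt (m : ℕ) : MvPolynomial ℕ ℤ :=
  1 + ∑ i ∈ Finset.range m, X i

open Classical in
/-- `f n = ∑_{r=1}^{n} (-1)^{n-r} ∑_{0=n₀<n₁<⋯<n_r=n} y_{n₁-n₀} ⋯ y_{n_r-n_{r-1}}`. -/
noncomputable def fElt (n : ℕ) : MvPolynomial ℕ ℤ :=
  ∑ r ∈ Finset.Icc 1 n,
    (-1 : MvPolynomial ℕ ℤ) ^ (n - r) *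
      ∑ ν ∈ Finset.univ.filter
          (fun ν : Fin (r + 1) → Fin (n + 1) =>
            StrictMono ν ∧ ν 0 = 0 ∧ ν (Fin.last r) = Fin.last n),
        ∏ j : Fin r, yElt ((ν j.succ : ℕ) - (ν j.castSucc : ℕ))

lemma yElt_zero : yElt 0 = 1 := by simp [yElt]

lemma yElt_succ (m : ℕ) : yElt (m + 1) = yElt m + X m := by
  simp [yElt, Finset.sum_range_succ]; ring

noncomputable def hPoly : ℕ → MvPolynomial ℕ ℤ
  | 0 => 1
  | (n+1) => -∑ s ∈ (Finset.range (n+1)).attach, X (n - s.1) * hPoly s.1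
  decreasing_by exact Nat.lt_succ_of_le (Nat.lt_succ_iff.mp (Finset.mem_range.mp s.2))

lemma hPoly_succ (n : ℕ) :
    hPoly (n+1) = -∑ s ∈ Finset.range (n+1), X (n - s) * hPoly s := by
  rw [hPoly, ← Finset.sum_attach (Finset.range (n+1)) (fun s => X (n - s) * hPoly s)]

lemma hPoly_homog (n : ℕ) :
    IsWeightedHomogeneous (fun i : ℕ => i + 1) (hPoly n) n := by
  induction n using Nat.strong_induction_on with
  | _ n ih =>
    match n with
    | 0 =>
      have h0 : hPoly 0 = 1 := by rw [hPoly]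
      rw [h0]
      exact isWeightedHomogeneous_one (R := ℤ) (M := ℕ) (fun i : ℕ => i + 1)
    | (n+1) =>
      rw [hPoly_succ]
      intro d hd
      rw [coeff_neg, neg_ne_zero] at hd
      refine (IsWeightedHomogeneous.sum _ _ _ fun s hs => ?_) hd
      have hs' : s ≤ n := Nat.lt_succ_iff.mp (Finset.mem_range.mp hs)
      have := (isWeightedHomogeneous_X (R := ℤ) (fun i : ℕ => i + 1) (n - s)).mul
        (ih s (by omega))
      rwa [show (n - s + 1) + s = n + 1 by omega] at this

lemma A_eq (n : ℕ) : ∑ s ∈ Finset.range (n+1), yElt (n - s) * hPoly s = 1 := by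
  induction n with
  | zero => simp [yElt_zero, hPoly]
  | succ n ih =>
    rw [Finset.sum_range_succ]
    have h1 : ∀ s ∈ Finset.range (n+1), yElt (n + 1 - s) * hPoly s
        = yElt (n - s) * hPoly s + X (n - s) * hPoly s := by
      intro s hs
      have : n + 1 - s = (n - s) + 1 := by
        have := Finset.mem_range.mp hs; omega
      rw [this, yElt_succ, add_mul]
    rw [Finset.sum_congr rfl h1, Finset.sum_add_distrib, ih, hPoly_succ]
    simp [yElt_zero]

open Classical in
noncomputable def Tsum (n r : ℕ) (s : Fin (n+1)) : MvPolynomial ℕ ℤ :=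
  ∑ ν ∈ Finset.univ.filter
      (fun ν : Fin (r + 1) → Fin (n + 1) =>
        StrictMono ν ∧ ν 0 = 0 ∧ ν (Fin.last r) = s),
    ∏ j : Fin r, yElt ((ν j.succ : ℕ) - (ν j.castSucc : ℕ))

lemma Tsum_one (n : ℕ) (hn : 1 ≤ n) : Tsum n 1 (Fin.last n) = yElt n := by
  classical
  rw [Tsum]
  have hset : (Finset.univ.filter
      (fun ν : Fin 2 → Fin (n + 1) =>
        StrictMono ν ∧ ν 0 = 0 ∧ ν (Fin.last 1) = Fin.last n))
      = {![0, Fin.last n]} := by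
    ext ν
    simp only [Finset.mem_filter, Finset.mem_univ, true_and, Finset.mem_singleton]
    constructor
    · rintro ⟨-, h0, h1⟩
      funext j
      fin_cases j
      · simpa using h0
      · simpa using h1
    · rintro rfl
      refine ⟨?_, rfl, rfl⟩
      rw [Fin.strictMono_iff_lt_succ]
      intro i
      fin_cases i
      simp [Fin.lt_iff_val_lt_val]
      omega
  rw [hset, Finset.sum_singleton, Fin.prod_univ_one]
  simp

lemma Tsum_zero_of_lt (n r : ℕ) (t : Fin (n+1)) (ht : (t : ℕ) < r) : Tsum n r t = 0 := by
  classical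
  rw [Tsum]
  rw [Finset.sum_eq_zero]
  intro ν hν
  exfalso
  simp only [Finset.mem_filter, Finset.mem_univ, true_and] at hν
  obtain ⟨hSM, h0, hlast⟩ := hν
  have hle : ∀ j : Fin (r+1), (ν j : ℕ) ≤ (t : ℕ) := by
    intro j
    have := hSM.monotone (Fin.le_last j)
    rw [hlast] at this
    exact this
  have hinj : Function.Injective (fun j : Fin (r+1) => (⟨(ν j : ℕ), by
      have := hle j; omega⟩ : Fin ((t : ℕ) + 1))) := by
    intro a b hab
    apply hSM.injective
    apply Fin.ext
    simpa using congrArg Fin.val hab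
  have := Fintype.card_le_of_injective _ hinj
  simp at this
  omega

lemma Tsum_step (n r : ℕ) :
    Tsum n (r+1) (Fin.last n)
      = ∑ s ∈ Finset.range n, Tsum s r (Fin.last s) * yElt (n - s) := by
  classical
  rw [Tsum]
  rw [← Finset.sum_fiberwise_of_maps_to (t := Finset.range n)
      (g := fun ν : Fin (r+1+1) → Fin (n+1) => (ν (Fin.castSucc (Fin.last r)) : ℕ))
      (fun ν hν => ?_) _]
  swap
  · -- maps-to
    simp only [Finset.mem_filter, Finset.mem_univ, true_and] at hν
    obtain ⟨hSM, h0, hlast⟩ := hν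
    have h : ν (Fin.castSucc (Fin.last r)) < ν (Fin.last (r+1)) :=
      hSM (Fin.castSucc_lt_last _)
    rw [hlast] at h
    rw [Finset.mem_range]
    exact h
  refine Finset.sum_congr rfl fun s hs => ?_
  have hsn : s < n := Finset.mem_range.mp hs
  rw [Tsum, Finset.sum_mul]
  refine Finset.sum_nbij'
    (i := fun ν (j : Fin (r+1)) => (⟨min ((ν j.castSucc : Fin (n+1)) : ℕ) s, by omega⟩ : Fin (s+1)))
    (j := fun ν' => Fin.snoc (fun k : Fin (r+1) => (⟨((ν' k : Fin (s+1)) : ℕ), by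
        have := (ν' k).isLt; omega⟩ : Fin (n+1))) (Fin.last n))
    ?_ ?_ ?_ ?_ ?_
  · -- hi : maps into filter
    intro ν hν
    simp only [Finset.mem_filter, Finset.mem_univ, true_and] at hν ⊢
    obtain ⟨⟨hSM, h0, hlast⟩, hfib⟩ := hν
    have hle : ∀ j : Fin (r+1), ((ν j.castSucc : Fin (n+1)) : ℕ) ≤ s := by
      intro j
      have : ν j.castSucc ≤ ν (Fin.castSucc (Fin.last r)) :=
        hSM.monotone (Fin.castSucc_le_castSucc_iff.mpr (Fin.le_last j))
      have := Fin.le_iff_val_le_val.mp this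
      omega
    refine ⟨?_, ?_, ?_⟩
    · intro a b hab
      rw [Fin.lt_iff_val_lt_val]
      simp only [min_eq_left (hle a), min_eq_left (hle b)]
      exact Fin.lt_iff_val_lt_val.mp (hSM (Fin.castSucc_lt_castSucc_iff.mpr hab))
    · apply Fin.ext
      simp only [Fin.castSucc_zero, h0]
      simp
    · apply Fin.ext
      simp [min_eq_left (hle (Fin.last r)), hfib]
  · -- hj
    intro ν' hν'
    simp only [Finset.mem_filter, Finset.mem_univ, true_and] at hν' ⊢
    obtain ⟨hSM, h0, hlast⟩ := hν'
    refine ⟨⟨?_, ?_, ?_⟩, ?_⟩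
    · rw [Fin.strictMono_iff_lt_succ]
      intro k
      induction k using Fin.lastCases with
      | last =>
        rw [Fin.succ_last, Fin.snoc_last, Fin.snoc_castSucc, Fin.lt_iff_val_lt_val]
        show ((ν' (Fin.last r) : Fin (s+1)) : ℕ) < ((Fin.last n : Fin (n+1)) : ℕ)
        rw [hlast, Fin.val_last, Fin.val_last]
        exact hsn
      | cast m =>
        rw [Fin.succ_castSucc, Fin.snoc_castSucc, Fin.snoc_castSucc, Fin.lt_iff_val_lt_val]
        exact Fin.lt_iff_val_lt_val.mp (hSM (Fin.castSucc_lt_succ : Fin.castSucc m < m.succ))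
    · have : (0 : Fin (r+1+1)) = Fin.castSucc 0 := rfl
      rw [this, Fin.snoc_castSucc]
      apply Fin.ext
      simp [h0]
    · exact Fin.snoc_last _ _
    · rw [Fin.snoc_castSucc]
      simp [hlast]
  · -- left inverse
    intro ν hν
    simp only [Finset.mem_filter, Finset.mem_univ, true_and] at hν
    obtain ⟨⟨hSM, h0, hlast⟩, hfib⟩ := hν
    have hle : ∀ j : Fin (r+1), ((ν j.castSucc : Fin (n+1)) : ℕ) ≤ s := by
      intro j
      have : ν j.castSucc ≤ ν (Fin.castSucc (Fin.last r)) :=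
        hSM.monotone (Fin.castSucc_le_castSucc_iff.mpr (Fin.le_last j))
      have := Fin.le_iff_val_le_val.mp this
      omega
    funext k
    induction k using Fin.lastCases with
    | last => simp only [Fin.snoc_last, hlast]
    | cast m =>
      simp only [Fin.snoc_castSucc]
      apply Fin.ext
      simp [min_eq_left (hle m)]
  · -- right inverse
    intro ν' hν'
    simp only [Finset.mem_filter, Finset.mem_univ, true_and] at hν'
    funext k
    apply Fin.ext
    have hv : ((ν' k : Fin (s+1)) : ℕ) ≤ s := by have := (ν' k).isLt; omega
    simp [Fin.snoc_castSucc, min_eq_left hv]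
  · -- products
    intro ν hν
    simp only [Finset.mem_filter, Finset.mem_univ, true_and] at hν
    obtain ⟨⟨hSM, h0, hlast⟩, hfib⟩ := hν
    have hle : ∀ j : Fin (r+1), ((ν j.castSucc : Fin (n+1)) : ℕ) ≤ s := by
      intro j
      have : ν j.castSucc ≤ ν (Fin.castSucc (Fin.last r)) :=
        hSM.monotone (Fin.castSucc_le_castSucc_iff.mpr (Fin.le_last j))
      have := Fin.le_iff_val_le_val.mp this
      omega
    rw [Fin.prod_univ_castSucc]
    congr 1
    · refine Finset.prod_congr rfl fun j _ => ?_
      congr 1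
      simp only [Fin.succ_castSucc, min_eq_left (hle j.succ), min_eq_left (hle j.castSucc)]
    · congr 1
      rw [Fin.succ_last, hlast, hfib]
      simp

lemma fElt_eq_Tsum (n : ℕ) :
    fElt n = ∑ r ∈ Finset.Icc 1 n, (-1 : MvPolynomial ℕ ℤ)^(n-r) * Tsum n r (Fin.last n) := rfl

lemma fElt_rec (n : ℕ) (hn : 1 ≤ n) :
    fElt n = (-1 : MvPolynomial ℕ ℤ)^(n-1) * yElt n
      + ∑ s ∈ Finset.range n, (-1 : MvPolynomial ℕ ℤ)^(n-1-s) * (yElt (n - s) * fElt s) := by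
  rw [fElt_eq_Tsum]
  have h1 : (1 : ℕ) ∈ Finset.Icc 1 n := by simp [hn]
  rw [← Finset.add_sum_erase _ _ h1, Tsum_one n hn]
  have herase : (Finset.Icc 1 n).erase 1 = Finset.Icc 2 n := by
    ext a; simp only [Finset.mem_erase, Finset.mem_Icc]; omega
  rw [herase]
  congr 1
  have hstep : ∑ r ∈ Finset.Icc 2 n, (-1 : MvPolynomial ℕ ℤ)^(n-r) * Tsum n r (Fin.last n)
      = ∑ r' ∈ Finset.Icc 1 (n-1),
          (-1 : MvPolynomial ℕ ℤ)^(n-1-r') * Tsum n (r'+1) (Fin.last n) := by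
    refine Finset.sum_nbij' (i := fun a => a - 1) (j := fun a => a + 1) ?_ ?_ ?_ ?_ ?_
    · intro a ha; simp only [Finset.mem_Icc] at ha ⊢; omega
    · intro a ha; simp only [Finset.mem_Icc] at ha ⊢; omega
    · intro a ha; simp only [Finset.mem_Icc] at ha; show a - 1 + 1 = a; omega
    · intro a ha; simp only [Finset.mem_Icc] at ha; show a + 1 - 1 = a; omega
    · intro a ha
      simp only [Finset.mem_Icc] at ha
      show _ = (-1 : MvPolynomial ℕ ℤ)^(n-1-(a-1)) * Tsum n ((a-1)+1) (Fin.last n)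
      rw [show a - 1 + 1 = a by omega, show n - 1 - (a - 1) = n - a by omega]
  rw [hstep]
  have hstep2 : ∀ r' ∈ Finset.Icc 1 (n-1),
      (-1 : MvPolynomial ℕ ℤ)^(n-1-r') * Tsum n (r'+1) (Fin.last n)
        = ∑ s ∈ Finset.range n,
            (-1 : MvPolynomial ℕ ℤ)^(n-1-r') * (Tsum s r' (Fin.last s) * yElt (n - s)) := by
    intro r' _
    rw [Tsum_step, Finset.mul_sum]
  rw [Finset.sum_congr rfl hstep2, Finset.sum_comm]
  refine Finset.sum_congr rfl fun s hs => ?_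
  have hsn : s < n := Finset.mem_range.mp hs
  rw [fElt_eq_Tsum]
  simp only [Finset.mul_sum]
  have hsub : Finset.Icc 1 s ⊆ Finset.Icc 1 (n-1) := by
    intro a ha; simp only [Finset.mem_Icc] at ha ⊢; omega
  have hvan : ∀ r' ∈ Finset.Icc 1 (n-1), r' ∉ Finset.Icc 1 s →
      (-1 : MvPolynomial ℕ ℤ)^(n-1-r') * (Tsum s r' (Fin.last s) * yElt (n - s)) = 0 := by
    intro r' hr' hr's
    simp only [Finset.mem_Icc] at hr' hr's
    rw [Tsum_zero_of_lt s r' (Fin.last s) (by simp; omega)]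
    ring
  rw [← Finset.sum_subset hsub hvan]
  refine Finset.sum_congr rfl fun r hr => ?_
  simp only [Finset.mem_Icc] at hr
  have hpow : ((-1 : MvPolynomial ℕ ℤ))^(n-1-r) = (-1)^(n-1-s) * (-1)^(s-r) := by
    rw [← pow_add]; congr 1; omega
  rw [hpow]; ring

noncomputable def hD (n : ℕ) : MvPolynomial ℕ ℤ := hPoly n - hPoly (n-1)

lemma key_identity (n : ℕ) (hn : 1 ≤ n) :
    yElt n + ∑ s ∈ Finset.range n, yElt (n-s) * (hPoly s - hPoly (s-1))
      = -(hPoly n - hPoly (n-1)) := by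
  have expand : ∑ s ∈ Finset.range n, yElt (n-s) * (hPoly s - hPoly (s-1))
      = (∑ s ∈ Finset.range n, yElt (n-s) * hPoly s)
        - (∑ s ∈ Finset.range n, yElt (n-s) * hPoly (s-1)) := by
    rw [← Finset.sum_sub_distrib]
    exact Finset.sum_congr rfl fun s _ => by ring
  have e1 : ∑ s ∈ Finset.range n, yElt (n-s) * hPoly s = 1 - hPoly n := by
    have h := A_eq n
    rw [Finset.sum_range_succ, Nat.sub_self, yElt_zero, one_mul] at h
    exact eq_sub_of_add_eq h
  have e2 : ∑ s ∈ Finset.range n, yElt (n-s) * hPoly (s-1)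
      = yElt n + (1 - hPoly (n-1)) := by
    obtain ⟨m, rfl⟩ : ∃ m, n = m + 1 := ⟨n-1, by omega⟩
    rw [Finset.sum_range_succ']
    have hc : ∀ i ∈ Finset.range m,
        yElt (m+1-(i+1)) * hPoly ((i+1)-1) = yElt (m - i) * hPoly i := by
      intro i hi
      rw [show m+1-(i+1) = m - i by omega, show (i+1)-1 = i by omega]
    rw [Finset.sum_congr rfl hc]
    have h2 := A_eq m
    rw [Finset.sum_range_succ, Nat.sub_self, yElt_zero, one_mul] at h2
    have h2' : ∑ s ∈ Finset.range m, yElt (m - s) * hPoly s = 1 - hPoly m :=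
      eq_sub_of_add_eq h2
    have h0 : hPoly (0 - 1) = 1 := by rw [show (0:ℕ) - 1 = 0 by omega, hPoly]
    rw [h2', h0, show m + 1 - 0 = m + 1 by omega, show m + 1 - 1 = m by omega, mul_one]
    ring
  rw [expand, e1, e2]
  ring

lemma fElt_eq (n : ℕ) (hn : 1 ≤ n) :
    fElt n = (-1 : MvPolynomial ℕ ℤ)^n * (hPoly n - hPoly (n-1)) := by
  induction n using Nat.strong_induction_on with
  | _ n ih =>
  rw [fElt_rec n hn]
  have hf0 : fElt 0 = 0 := by simp [fElt]
  have hterm : ∀ s ∈ Finset.range n,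
      (-1 : MvPolynomial ℕ ℤ)^(n-1-s) * (yElt (n-s) * fElt s)
        = (-1 : MvPolynomial ℕ ℤ)^(n-1) * (yElt (n-s) * (hPoly s - hPoly (s-1))) := by
    intro s hs
    have hsn : s < n := Finset.mem_range.mp hs
    rcases Nat.eq_zero_or_pos s with rfl | hs1
    · rw [hf0, show (0:ℕ) - 1 = 0 by omega, sub_self]
      ring
    · rw [ih s hsn hs1]
      have hpow : ((-1 : MvPolynomial ℕ ℤ))^(n-1) = (-1)^(n-1-s) * (-1)^s := by
        rw [← pow_add]; congr 1; omega
      rw [hpow]; ring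
  rw [Finset.sum_congr rfl hterm, ← Finset.mul_sum, ← mul_add, key_identity n hn]
  have hpow : ((-1 : MvPolynomial ℕ ℤ))^n = (-1)^(n-1) * (-1)^1 := by
    rw [← pow_add]; congr 1; omega
  rw [hpow]; ring

/-- In `R = ℤ[x₁,x₂,…]` graded by `deg x_m = m`, the element `f n`
lies in the ideal `I_{n-1}` of elements all of whose homogeneous components have weighted
degree at least `n - 1`: every monomial of `f n` with nonzero coefficient has weighted
degree `≥ n - 1`. -/
theorem fElt_mem_I
    (n : ℕ) (hn : 1 ≤ n) (d : ℕ →₀ ℕ) (hd : MvPolynomial.coeff d (fElt n) ≠ 0) :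
    n - 1 ≤ d.sum fun i k => (i + 1) * k := by
  rw [fElt_eq n hn] at hd
  rw [show ((-1 : MvPolynomial ℕ ℤ))^n = C ((-1 : ℤ)^n) by simp, coeff_C_mul, coeff_sub] at hd
  have h2 : coeff d (hPoly n) - coeff d (hPoly (n-1)) ≠ 0 := by
    intro h; rw [h, mul_zero] at hd; exact hd rfl
  have h3 : coeff d (hPoly n) ≠ 0 ∨ coeff d (hPoly (n-1)) ≠ 0 := by
    by_contra hc
    push_neg at hc
    rw [hc.1, hc.2, sub_self] at h2
    exact h2 rfl
  have hw : ∀ m : ℕ, coeff d (hPoly m) ≠ 0 → (d.sum fun i k => (i + 1) * k) = m := by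
    intro m hm
    have := hPoly_homog m hm
    rw [← this, Finsupp.weight_apply, Finsupp.sum]
    rw [Finsupp.sum]
    refine Finset.sum_congr rfl fun i _ => ?_
    simp [mul_comm]
  rcases h3 with h | h
  · rw [hw n h]; omega
  · rw [hw (n-1) h]
end

section
/- Let $\mathfrak{o}$ be a discrete valuation ring, $M$ a finite-length $\mathfrak{o}$-module, $L$ a free $\mathfrak{o}$-module of rank $n = n_1 + \cdots + n_r$, and $f: L \twoheadrightarrow M$ a surjection. Suppose $0 = F_0 L \subset \cdots \subset F_r L = L$ is a filtration by submodules with $F_i L / F_{i-1} L$ free of rank $n_i$, and let $F_i M = f(F_i L)$. If $x_1, \ldots, x_n \in M$ is a sequence such that $x_1, \ldots, x_{n_1 + \cdots + n_i}$ generate $F_i M$ for each $i$, then there exists a sequence $y_1, \ldots, y_n \in L$ with $f(y_j) = x_j$ for all $j$ and such that $y_1, \ldots, y_{n_1 + \cdots + n_i}$ generate $F_i L$ for each $i$ (in particular $y_1,\ldots,y_n$ is a basis of $L$). -/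
/-- The `j`-th graded piece `F (j+1) / F j` of a filtration by submodules. -/
def FilGraded {𝒪 L : Type} [CommRing 𝒪] [AddCommGroup L] [Module 𝒪 L] {r : ℕ}
    (F : Fin (r + 1) → Submodule 𝒪 L) (j : Fin r) : Type :=
  ↥(F j.succ) ⧸ Submodule.comap (F j.succ).subtype (F j.castSucc)

noncomputable instance {𝒪 L : Type} [CommRing 𝒪] [AddCommGroup L] [Module 𝒪 L] {r : ℕ}
    (F : Fin (r + 1) → Submodule 𝒪 L) (j : Fin r) : AddCommGroup (FilGraded F j) :=
  Submodule.Quotient.addCommGroup _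

noncomputable instance {𝒪 L : Type} [CommRing 𝒪] [AddCommGroup L] [Module 𝒪 L] {r : ℕ}
    (F : Fin (r + 1) → Submodule 𝒪 L) (j : Fin r) : Module 𝒪 (FilGraded F j) :=
  Submodule.Quotient.module _

/-- The partial sum `n₁ + ⋯ + n_i` of a partition. -/
def psum {r : ℕ} (nvec : Fin r → ℕ) (i : ℕ) : ℕ :=
  ∑ j ∈ Finset.univ.filter (fun j : Fin r => (j : ℕ) < i), nvec j

open Submodule Set


section helpers

lemma psum_zero {r : ℕ} (nvec : Fin r → ℕ) : psum nvec 0 = 0 := by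
  simp [psum]

lemma psum_mono {r : ℕ} (nvec : Fin r → ℕ) {a b : ℕ} (h : a ≤ b) :
    psum nvec a ≤ psum nvec b := by
  apply Finset.sum_le_sum_of_subset
  intro j hj
  simp only [Finset.mem_filter, Finset.mem_univ, true_and] at hj ⊢
  omega

lemma psum_succ {r : ℕ} (nvec : Fin r → ℕ) (i : ℕ) (h : i < r) :
    psum nvec (i + 1) = psum nvec i + nvec ⟨i, h⟩ := by
  classical
  have hins : Finset.univ.filter (fun j : Fin r => (j : ℕ) < i + 1) =
      insert ⟨i, h⟩ (Finset.univ.filter (fun j : Fin r => (j : ℕ) < i)) := by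
    ext j
    simp only [Finset.mem_filter, Finset.mem_univ, true_and, Finset.mem_insert, Fin.ext_iff]
    omega
  rw [psum, hins, Finset.sum_insert (by simp), psum, add_comm]

lemma psum_r {r : ℕ} (nvec : Fin r → ℕ) : psum nvec r = ∑ j, nvec j := by
  rw [psum]
  congr 1
  ext j
  simp [j.isLt]

end helpers


lemma field_coset_span {F V : Type*} [Field F] [AddCommGroup V] [Module F V]
    [FiniteDimensional F V] (W : Submodule F V) {k : ℕ} (hk : Module.finrank F V = k)
    (c : Fin k → V) (hspan : Submodule.span F (Set.range c) ⊔ W = ⊤) :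
    ∃ c' : Fin k → V, (∀ j, c' j - c j ∈ W) ∧ Submodule.span F (Set.range c') = ⊤ := by
  have key : ∀ d : ℕ, ∀ c : Fin k → V,
      k - Module.finrank F (span F (Set.range c)) ≤ d →
      span F (Set.range c) ⊔ W = ⊤ →
      ∃ c' : Fin k → V, (∀ j, c' j - c j ∈ W) ∧ span F (Set.range c') = ⊤ := by
    intro d
    induction d with
    | zero =>
      intro c hle hsup
      refine ⟨c, fun j => by simp, ?_⟩
      have h1 : Module.finrank F (span F (Set.range c)) ≤ Module.finrank F V :=
        Submodule.finrank_le _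
      have : Module.finrank F (span F (Set.range c)) = k := by omega
      exact Submodule.eq_top_of_finrank_eq (by rw [this, hk])
    | succ d ih =>
      intro c hle hsup
      by_cases htop : span F (Set.range c) = ⊤
      · exact ⟨c, fun j => by simp, htop⟩
      -- find w ∈ W, w ∉ span c
      have hWle : ¬ W ≤ span F (Set.range c) := by
        intro h
        exact htop (by rw [← hsup, sup_eq_left.mpr h])
      obtain ⟨w, hwW, hwn⟩ := SetLike.not_le_iff_exists.mp hWle
      -- find j₀ with c j₀ in span of the others
      have hdep : ¬ LinearIndependent F c := by
        intro h
        apply htop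
        apply Submodule.eq_top_of_finrank_eq
        rw [finrank_span_eq_card h, Fintype.card_fin, hk]
      rw [linearIndependent_iff_notMem_span] at hdep
      push_neg at hdep
      obtain ⟨j₀, hj₀⟩ := hdep
      set c' : Fin k → V := Function.update c j₀ (c j₀ + w) with hc'
      have hrest : ∀ j, j ≠ j₀ → c' j = c j := fun j hj => Function.update_of_ne hj _ _
      have hcj₀ : c' j₀ = c j₀ + w := Function.update_self _ _ _
      have hle1 : span F (Set.range c) ≤ span F (Set.range c') := by
        rw [Submodule.span_le]
        rintro _ ⟨j, rfl⟩
        by_cases hj : j = j₀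
        · rw [hj]
          have hsub : span F (c '' (Set.univ \ Set.singleton j₀)) ≤ span F (Set.range c') := by
            apply Submodule.span_mono
            rintro _ ⟨i, ⟨-, hi⟩, rfl⟩
            exact ⟨i, by rw [hrest i (fun h => hi h)]⟩
          exact hsub hj₀
        · exact Submodule.subset_span ⟨j, hrest j hj⟩
      have hwmem : w ∈ span F (Set.range c') := by
        have h1 : c' j₀ ∈ span F (Set.range c') := Submodule.subset_span ⟨j₀, rfl⟩
        have h2 : c j₀ ∈ span F (Set.range c') := hle1 (Submodule.subset_span ⟨j₀, rfl⟩)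
        have := Submodule.sub_mem _ h1 h2
        rwa [hcj₀, add_sub_cancel_left] at this
      have hlt : span F (Set.range c) < span F (Set.range c') :=
        lt_of_le_of_ne hle1 (fun h => hwn (h ▸ hwmem))
      have hfr : Module.finrank F (span F (Set.range c)) <
          Module.finrank F (span F (Set.range c')) :=
        Submodule.finrank_lt_finrank_of_lt hlt
      have hsup' : span F (Set.range c') ⊔ W = ⊤ := by
        rw [eq_top_iff, ← hsup]
        refine sup_le (le_trans hle1 le_sup_left) le_sup_right
      obtain ⟨c'', hc''W, hc''span⟩ := ih c' (by omega) hsup'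
      refine ⟨c'', fun j => ?_, hc''span⟩
      have : c'' j - c j = (c'' j - c' j) + (c' j - c j) := by abel
      rw [this]
      refine W.add_mem (hc''W j) ?_
      by_cases hj : j = j₀
      · subst hj; rw [hcj₀]; simpa using hwW
      · rw [hrest j hj]; simpa using W.zero_mem
  exact key k c (by omega) hspan


lemma local_coset_span {𝒪 Q : Type*} [CommRing 𝒪] [IsLocalRing 𝒪] [AddCommGroup Q] [Module 𝒪 Q]
    [Module.Free 𝒪 Q] [Module.Finite 𝒪 Q] (K : Submodule 𝒪 Q) {k : ℕ}
    (hk : Module.finrank 𝒪 Q = k) (c : Fin k → Q)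
    (hspan : Submodule.span 𝒪 (Set.range c) ⊔ K = ⊤) :
    ∃ c' : Fin k → Q, (∀ j, c' j - c j ∈ K) ∧ Submodule.span 𝒪 (Set.range c') = ⊤ := by
  classical
  set κ := IsLocalRing.ResidueField 𝒪
  set res := IsLocalRing.residue 𝒪 with hres
  have hressurj : Function.Surjective res := Ideal.Quotient.mk_surjective
  let b : Module.Basis (Fin k) 𝒪 Q := Module.finBasisOfFinrankEq 𝒪 Q hk
  set ρ : Q → (Fin k → κ) := fun q j => res (b.repr q j) with hρ
  have hρ0 : ρ 0 = 0 := by funext j; simp [hρ]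
  have hρadd : ∀ u v, ρ (u + v) = ρ u + ρ v := by intro u v; funext j; simp [hρ]
  have hρsmul : ∀ (a : 𝒪) (v), ρ (a • v) = res a • ρ v := by
    intro a v; funext j; simp [hρ]
  have hρsub : ∀ u v, ρ (u - v) = ρ u - ρ v := by intro u v; funext j; simp [hρ]
  have hρsurj : Function.Surjective ρ := by
    intro vq
    choose a ha using fun j => hressurj (vq j)
    refine ⟨b.equivFun.symm a, ?_⟩
    funext j
    show res (b.repr (b.equivFun.symm a) j) = vq j
    have hb : b.repr (b.equivFun.symm a) j = a j := by
      rw [← Module.Basis.equivFun_apply, LinearEquiv.apply_symm_apply]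
    rw [hb, ha]
  -- the image of K is a κ-submodule
  let W : Submodule κ (Fin k → κ) :=
    { carrier := ρ '' K
      add_mem' := by
        rintro _ _ ⟨u, hu, rfl⟩ ⟨v, hv, rfl⟩
        exact ⟨u + v, K.add_mem hu hv, hρadd u v⟩
      zero_mem' := ⟨0, K.zero_mem, hρ0⟩
      smul_mem' := by
        rintro aq _ ⟨v, hv, rfl⟩
        obtain ⟨a, rfl⟩ := hressurj aq
        exact ⟨a • v, K.smul_mem a hv, hρsmul a v⟩ }
  have hmap_span : ∀ u ∈ span 𝒪 (Set.range c), ρ u ∈ span κ (Set.range (ρ ∘ c)) := by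
    intro u hu
    induction hu using Submodule.span_induction with
    | mem y hy => obtain ⟨j, rfl⟩ := hy; exact Submodule.subset_span ⟨j, rfl⟩
    | zero => rw [hρ0]; exact Submodule.zero_mem _
    | add y z _ _ hy hz => rw [hρadd]; exact Submodule.add_mem _ hy hz
    | smul a y _ hy => rw [hρsmul]; exact Submodule.smul_mem _ _ hy
  have hspan2 : span κ (Set.range (ρ ∘ c)) ⊔ W = ⊤ := by
    rw [eq_top_iff]
    rintro vq -
    obtain ⟨q, rfl⟩ := hρsurj vq
    have hq : q ∈ span 𝒪 (Set.range c) ⊔ K := hspan ▸ Submodule.mem_top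
    obtain ⟨u, hu, w', hw', rfl⟩ := Submodule.mem_sup.mp hq
    rw [hρadd]
    have hWmem : ρ w' ∈ W := ⟨w', hw', rfl⟩
    exact Submodule.add_mem_sup (hmap_span u hu) hWmem
  obtain ⟨cq, hcqW, hcqspan⟩ :=
    field_coset_span W (by simp) (ρ ∘ c) hspan2
  choose w hwK hwρ using fun j => (hcqW j : cq j - (ρ ∘ c) j ∈ W)
  refine ⟨fun j => c j + w j, fun j => by simpa using hwK j, ?_⟩
  -- Nakayama
  set c' : Fin k → Q := fun j => c j + w j with hc'
  have hρc' : ∀ j, ρ (c' j) = cq j := by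
    intro j
    have := hwρ j
    rw [hc']
    simp only [hρadd]
    rw [this]
    simp
  have hsup : (⊤ : Submodule 𝒪 Q) ≤ span 𝒪 (Set.range c') ⊔
      (IsLocalRing.maximalIdeal 𝒪) • (⊤ : Submodule 𝒪 Q) := by
    rintro q -
    have hq : ρ q ∈ span κ (Set.range cq) := hcqspan ▸ Submodule.mem_top
    rw [mem_span_range_iff_exists_fun] at hq
    obtain ⟨aq, haq⟩ := hq
    choose a ha using fun j => hressurj (aq j)
    set u : Q := ∑ j, a j • c' j with hu
    have hρu : ρ u = ρ q := by
      rw [← haq]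
      funext t
      calc ρ u t = ∑ j, res (a j) * res (b.repr (c' j) t) := by
            simp only [hρ, hu, map_sum, map_smul, Finsupp.finset_sum_apply,
              Finsupp.smul_apply, smul_eq_mul, map_mul]
        _ = ∑ j, aq j * cq j t := by
            refine Finset.sum_congr rfl fun j _ => ?_
            rw [ha]
            congr 1
            exact congrFun (hρc' j) t
        _ = (∑ i, aq i • cq i) t := by simp [Finset.sum_apply]
    have hqu : q - u ∈ (IsLocalRing.maximalIdeal 𝒪) • (⊤ : Submodule 𝒪 Q) := by
      have hcoord : ∀ t, b.repr (q - u) t ∈ IsLocalRing.maximalIdeal 𝒪 := by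
        intro t
        have : ρ (q - u) = 0 := by rw [hρsub, hρu, sub_self]
        have ht := congrFun this t
        rw [hρ] at ht
        exact (Ideal.Quotient.eq_zero_iff_mem).mp ht
      have hrepr := b.sum_repr (q - u)
      rw [← hrepr]
      exact Submodule.sum_mem _ fun t _ =>
        Submodule.smul_mem_smul (hcoord t) Submodule.mem_top
    have humem : u ∈ span 𝒪 (Set.range c') :=
      Submodule.sum_mem _ fun j _ => Submodule.smul_mem _ _ (Submodule.subset_span ⟨j, rfl⟩)
    have : q = u + (q - u) := by abel
    rw [this]
    exact Submodule.add_mem_sup humem hqu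
  rw [eq_top_iff]
  exact Submodule.le_of_le_smul_of_le_jacobson_bot Module.Finite.fg_top
    (IsLocalRing.maximalIdeal_le_jacobson ⊥) hsup


lemma basis_of_span_eq_top {𝒪 L : Type*} [CommRing 𝒪] [Nontrivial 𝒪] [AddCommGroup L] [Module 𝒪 L]
    [Module.Free 𝒪 L] [Module.Finite 𝒪 L] {n : ℕ} (hn : Module.finrank 𝒪 L = n)
    (y : Fin n → L) (hspan : Submodule.span 𝒪 (Set.range y) = ⊤) :
    ∃ b : Module.Basis (Fin n) 𝒪 L, ∀ j, b j = y j := by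
  let g : (Fin n → 𝒪) →ₗ[𝒪] L := Fintype.linearCombination 𝒪 y
  have hgsurj : Function.Surjective g := by
    rw [← LinearMap.range_eq_top, Fintype.range_linearCombination, hspan]
  let e : L ≃ₗ[𝒪] (Fin n → 𝒪) := (Module.finBasisOfFinrankEq 𝒪 L hn).equivFun
  have hendo : Function.Surjective (g ∘ₗ (e : L →ₗ[𝒪] (Fin n → 𝒪))) :=
    hgsurj.comp e.surjective
  have hinj : Function.Injective (g ∘ₗ (e : L →ₗ[𝒪] (Fin n → 𝒪))) :=
    OrzechProperty.injective_of_surjective_endomorphism _ hendo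
  have hginj : Function.Injective g := by
    intro a b hab
    have := hinj (show (g ∘ₗ (e : L →ₗ[𝒪] (Fin n → 𝒪))) (e.symm a)
        = (g ∘ₗ (e : L →ₗ[𝒪] (Fin n → 𝒪))) (e.symm b) by
      simp [hab])
    exact e.symm.injective this
  have hli : LinearIndependent 𝒪 y := by
    rw [Fintype.linearIndependent_iff]
    intro a ha
    have : g a = g 0 := by
      rw [map_zero, Fintype.linearCombination_apply, ha]
    have := hginj this
    intro i; rw [this]; rfl
  refine ⟨Module.Basis.mk hli (by rw [hspan]), fun j => Module.Basis.mk_apply _ _ _⟩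
/-- Over a DVR `𝒪`, let `f : L ↠ M` be a surjection from a free module
of rank `n = n₁ + ⋯ + n_r` onto a finite-length module, `F_• L` a filtration with free
graded quotients of ranks `n_i`, and `F_i M = f(F_i L)` the induced filtration.  Any
sequence `x₁, …, x_n` of `M` compatible with `F_• M` lifts to a sequence `y₁, …, y_n`
of `L` compatible with `F_• L` (hence a basis of `L`) with `f(y_j) = x_j`. -/
theorem exists_compatible_lift_of_filtration
    (𝒪 : Type) [CommRing 𝒪] [IsDomain 𝒪] [IsDiscreteValuationRing 𝒪]
    (M : Type) [AddCommGroup M] [Module 𝒪 M] (hM : IsFiniteLength 𝒪 M)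
    {r : ℕ} (nvec : Fin r → ℕ) (hpos : ∀ j, 1 ≤ nvec j)
    {n : ℕ} (hn : n = ∑ j, nvec j)
    (L : Type) [AddCommGroup L] [Module 𝒪 L] [Module.Free 𝒪 L] [Module.Finite 𝒪 L]
    (hrank : Module.finrank 𝒪 L = n)
    (f : L →ₗ[𝒪] M) (hf : Function.Surjective f)
    (FL : Fin (r + 1) → Submodule 𝒪 L) (hmono : Monotone FL)
    (h0 : FL 0 = ⊥) (htop : FL (Fin.last r) = ⊤)
    (hfree : ∀ j : Fin r, Nonempty (FilGraded FL j ≃ₗ[𝒪] (Fin (nvec j) → 𝒪)))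
    (x : Fin n → M)
    (hx : ∀ i : Fin (r + 1),
      Submodule.span 𝒪 (x '' {j : Fin n | (j : ℕ) < psum nvec (i : ℕ)}) =
        Submodule.map f (FL i)) :
    ∃ y : Fin n → L,
      (∀ j, f (y j) = x j) ∧
      (∀ i : Fin (r + 1),
        Submodule.span 𝒪 (y '' {j : Fin n | (j : ℕ) < psum nvec (i : ℕ)}) = FL i) ∧
      ∃ b : Module.Basis (Fin n) 𝒪 L, ∀ j, b j = y j := by
  classical
  have hpsum_n : psum nvec r = n := by rw [psum_r, hn]
  -- the level function
  have hlev_ex : ∀ j : Fin n, ∃ i : ℕ, i < r ∧ psum nvec i ≤ (j : ℕ) ∧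
      (j : ℕ) < psum nvec (i + 1) := by
    intro j
    set P : ℕ → Prop := fun i => psum nvec i ≤ (j : ℕ) with hP
    have hP0 : P 0 := by simp [hP, psum_zero]
    have hspec : P (Nat.findGreatest P r) := Nat.findGreatest_spec (Nat.zero_le r) hP0
    have hle : Nat.findGreatest P r ≤ r := Nat.findGreatest_le r
    have hlt : Nat.findGreatest P r < r := by
      rcases lt_or_eq_of_le hle with h | h
      · exact h
      · exfalso
        have h2 : psum nvec (Nat.findGreatest P r) ≤ (j : ℕ) := hspec
        rw [h, hpsum_n] at h2
        have := j.isLt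
        omega
    refine ⟨Nat.findGreatest P r, hlt, hspec, ?_⟩
    by_contra hcon
    push_neg at hcon
    exact Nat.findGreatest_is_greatest (P := P) (n := r) (Nat.lt_succ_self _) (by omega) hcon
  choose lev hlev1 hlev2 hlev3 using hlev_ex
  -- (A): j < psum i → lev j + 1 ≤ i
  have hA : ∀ (j : Fin n) (i : ℕ), (j : ℕ) < psum nvec i → lev j + 1 ≤ i := by
    intro j i hj
    by_contra hcon
    push_neg at hcon
    have h1 : psum nvec i ≤ psum nvec (lev j) := psum_mono nvec (by omega)
    have h2 := hlev2 j
    omega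
  -- uniqueness of level
  have hlev_uniq : ∀ (j : Fin n) (i : ℕ), psum nvec i ≤ (j : ℕ) → (j : ℕ) < psum nvec (i + 1) →
      lev j = i := by
    intro j i h1 h2
    rcases Nat.lt_trichotomy (lev j) i with h | h | h
    · have h3 : psum nvec (lev j + 1) ≤ psum nvec i := psum_mono nvec (by omega)
      have h4 := hlev3 j
      omega
    · exact h
    · have h3 : psum nvec (i + 1) ≤ psum nvec (lev j) := psum_mono nvec (by omega)
      have h4 := hlev2 j
      omega
  have hpsucc : ∀ i : Fin r, psum nvec ((i : ℕ) + 1) = psum nvec (i : ℕ) + nvec i := by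
    intro i
    rw [psum_succ nvec i i.isLt, Fin.eta]
  -- the index embeddings
  have hemb_lt : ∀ (i : Fin r) (t : Fin (nvec i)), psum nvec (i : ℕ) + (t : ℕ) < n := by
    intro i t
    have h1 := hpsucc i
    have h2 : psum nvec ((i : ℕ) + 1) ≤ psum nvec r := psum_mono nvec i.isLt
    have := t.isLt
    omega
  set emb : ∀ i : Fin r, Fin (nvec i) → Fin n :=
    fun i t => ⟨psum nvec (i : ℕ) + (t : ℕ), hemb_lt i t⟩ with hembdef
  have hemb_lt' : ∀ (i : Fin r) (t : Fin (nvec i)), ((emb i t : Fin n) : ℕ) <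
      psum nvec ((i : ℕ) + 1) := by
    intro i t
    have h1 := hpsucc i
    have := t.isLt
    simp only [hembdef]
    omega
  have hlev_emb : ∀ (i : Fin r) (t : Fin (nvec i)), lev (emb i t) = (i : ℕ) := by
    intro i t
    apply hlev_uniq
    · simp [hembdef]
    · exact hemb_lt' i t
  -- initial lifts z
  have hzex : ∀ j : Fin n, ∃ z ∈ FL ⟨lev j + 1, by have := hlev1 j; omega⟩, f z = x j := by
    intro j
    have hmem : x j ∈ Submodule.map f (FL ⟨lev j + 1, by have := hlev1 j; omega⟩) := by
      rw [← hx ⟨lev j + 1, by have := hlev1 j; omega⟩]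
      exact Submodule.subset_span ⟨j, hlev3 j, rfl⟩
    exact Submodule.mem_map.mp hmem
  choose z hz1 hz2 using hzex
  -- z j lands in FL i.succ whenever j < psum (i+1)
  have hzmem : ∀ (i : Fin r) (j : Fin n), (j : ℕ) < psum nvec ((i : ℕ) + 1) →
      z j ∈ FL i.succ := by
    intro i j hj
    have h1 : lev j + 1 ≤ (i : ℕ) + 1 := hA j _ hj
    refine hmono ?_ (hz1 j)
    rw [Fin.le_def]
    simpa using h1
  have hzmemc : ∀ (i : Fin r) (j : Fin n), (j : ℕ) < psum nvec (i : ℕ) →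
      z j ∈ FL i.castSucc := by
    intro i j hj
    have h1 : lev j + 1 ≤ (i : ℕ) := hA j _ hj
    refine hmono ?_ (hz1 j)
    rw [Fin.le_def]
    simpa using h1
  -- the per-level construction
  have hlevel : ∀ i : Fin r, ∃ yv : Fin (nvec i) → L,
      (∀ t, yv t ∈ FL i.succ) ∧ (∀ t, f (yv t) = x (emb i t)) ∧
      (FL i.succ ≤ FL i.castSucc ⊔ Submodule.span 𝒪 (Set.range yv)) := by
    intro i
    set Wi : Submodule 𝒪 ↥(FL i.succ) :=
      Submodule.comap (FL i.succ).subtype (FL i.castSucc) with hWidef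
    obtain ⟨e₀⟩ := hfree i
    have e : (↥(FL i.succ) ⧸ Wi) ≃ₗ[𝒪] (Fin (nvec i) → 𝒪) := e₀
    haveI hFree : Module.Free 𝒪 (↥(FL i.succ) ⧸ Wi) := Module.Free.of_equiv e.symm
    haveI hFin : Module.Finite 𝒪 (↥(FL i.succ) ⧸ Wi) := Module.Finite.equiv e.symm
    have hfr : Module.finrank 𝒪 (↥(FL i.succ) ⧸ Wi) = nvec i := by
      rw [e.finrank_eq, Module.finrank_pi, Fintype.card_fin]
    set Ki : Submodule 𝒪 (↥(FL i.succ) ⧸ Wi) :=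
      Submodule.map Wi.mkQ (Submodule.comap (FL i.succ).subtype (LinearMap.ker f)) with hKidef
    set c : Fin (nvec i) → (↥(FL i.succ) ⧸ Wi) :=
      fun t => Wi.mkQ ⟨z (emb i t), hzmem i (emb i t) (hemb_lt' i t)⟩ with hcdef
    -- c-span absorbs all mkQ (z j) for j < psum (i+1)
    have hczj : ∀ (j : Fin n) (hj : (j : ℕ) < psum nvec ((i : ℕ) + 1)),
        Wi.mkQ ⟨z j, hzmem i j hj⟩ ∈ Submodule.span 𝒪 (Set.range c) := by
      intro j hj
      by_cases hcase : (j : ℕ) < psum nvec (i : ℕ)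
      · have hzero : Wi.mkQ ⟨z j, hzmem i j hj⟩ = 0 := by
          rw [Submodule.mkQ_apply, Submodule.Quotient.mk_eq_zero]
          exact hzmemc i j hcase
        rw [hzero]
        exact Submodule.zero_mem _
      · push_neg at hcase
        have hlt : (j : ℕ) - psum nvec (i : ℕ) < nvec i := by
          have := hpsucc i
          omega
        have hjeq : emb i ⟨(j : ℕ) - psum nvec (i : ℕ), hlt⟩ = j := by
          apply Fin.ext
          simp only [hembdef]
          omega
        have hceq : c ⟨(j : ℕ) - psum nvec (i : ℕ), hlt⟩ = Wi.mkQ ⟨z j, hzmem i j hj⟩ :=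
          congrArg _ (Subtype.ext (congrArg z hjeq))
        rw [← hceq]
        exact Submodule.subset_span ⟨_, rfl⟩
    set Sset : Set (Fin n) := {j : Fin n | (j : ℕ) < psum nvec ((i : ℕ) + 1)} with hSdef
    have hspan_le : Submodule.span 𝒪 (z '' Sset) ≤ FL i.succ := by
      rw [Submodule.span_le]
      rintro _ ⟨j, hj, rfl⟩
      exact hzmem i j hj
    have hπspan : ∀ u ∈ Submodule.span 𝒪 (z '' Sset), ∀ h : u ∈ FL i.succ,
        Wi.mkQ ⟨u, h⟩ ∈ Submodule.span 𝒪 (Set.range c) := by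
      intro u hu
      induction hu using Submodule.span_induction with
      | mem p hp =>
        intro h
        obtain ⟨j, hj, rfl⟩ := hp
        exact hczj j hj
      | zero =>
        intro h
        have h00 : (⟨(0 : L), h⟩ : ↥(FL i.succ)) = 0 := rfl
        rw [h00, map_zero]
        exact Submodule.zero_mem _
      | add p q hp hq ihp ihq =>
        intro h
        have hpq : (⟨p + q, h⟩ : ↥(FL i.succ)) = ⟨p, hspan_le hp⟩ + ⟨q, hspan_le hq⟩ := rfl
        rw [hpq, map_add]
        exact Submodule.add_mem _ (ihp (hspan_le hp)) (ihq (hspan_le hq))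
      | smul a p hp ihp =>
        intro h
        have hap : (⟨a • p, h⟩ : ↥(FL i.succ)) = a • ⟨p, hspan_le hp⟩ := rfl
        rw [hap, map_smul]
        exact Submodule.smul_mem _ _ (ihp (hspan_le hp))
    -- surjectivity modulo Ki
    have hsurjGi : Submodule.span 𝒪 (Set.range c) ⊔ Ki = ⊤ := by
      rw [eq_top_iff]
      rintro g -
      obtain ⟨v, rfl⟩ := Wi.mkQ_surjective g
      have hxi : Submodule.span 𝒪 (x '' Sset) = Submodule.map f (FL i.succ) := hx i.succ
      have hfv : f v.1 ∈ Submodule.span 𝒪 (x '' Sset) := by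
        rw [hxi]; exact ⟨v.1, v.2, rfl⟩
      have hxs : x '' Sset = (fun j => f (z j)) '' Sset :=
        Set.image_congr (fun j _ => (hz2 j).symm)
      have himage : (fun j => f (z j)) '' Sset = f '' (z '' Sset) := by
        rw [Set.image_image]
      rw [hxs, himage, ← Submodule.map_span] at hfv
      obtain ⟨u, hu, hfu⟩ := Submodule.mem_map.mp hfv
      have huFL : u ∈ FL i.succ := hspan_le hu
      have hdiffker : v.1 - u ∈ LinearMap.ker f := by
        rw [LinearMap.mem_ker, map_sub, hfu, sub_self]
      have hsplit : Wi.mkQ v = Wi.mkQ ⟨u, huFL⟩ +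
          Wi.mkQ ⟨v.1 - u, (FL i.succ).sub_mem v.2 huFL⟩ := by
        rw [← map_add]
        congr 1
        exact Subtype.ext (by simp)
      rw [hsplit]
      exact Submodule.add_mem_sup (hπspan u hu huFL)
        ⟨⟨v.1 - u, (FL i.succ).sub_mem v.2 huFL⟩, hdiffker, rfl⟩
    -- apply the coset-lifting lemma over the local ring
    obtain ⟨c', hdiff, hspanc'⟩ := local_coset_span Ki hfr c hsurjGi
    -- lift the adjustments
    have hwex : ∀ t : Fin (nvec i), ∃ w : ↥(FL i.succ),
        w.1 ∈ LinearMap.ker f ∧ Wi.mkQ w = c' t - c t := by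
      intro t
      obtain ⟨w, hw1, hw2⟩ := Submodule.mem_map.mp (hdiff t)
      exact ⟨w, hw1, hw2⟩
    choose w hw1 hw2 using hwex
    refine ⟨fun t => z (emb i t) + (w t).1, ?_, ?_, ?_⟩
    · intro t
      exact (FL i.succ).add_mem (hzmem i (emb i t) (hemb_lt' i t)) (w t).2
    · intro t
      rw [map_add, hz2 (emb i t), LinearMap.mem_ker.mp (hw1 t), add_zero]
    · -- FL i.succ ≤ FL i.castSucc ⊔ span (range yv)
      set yv : Fin (nvec i) → L := fun t => z (emb i t) + (w t).1 with hyvdef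
      have hyvmem : ∀ t, yv t ∈ FL i.succ := fun t =>
        (FL i.succ).add_mem (hzmem i (emb i t) (hemb_lt' i t)) (w t).2
      set yvS : Fin (nvec i) → ↥(FL i.succ) := fun t => ⟨yv t, hyvmem t⟩ with hyvSdef
      have hπyvS : ∀ t, Wi.mkQ (yvS t) = c' t := by
        intro t
        have : yvS t = ⟨z (emb i t), hzmem i (emb i t) (hemb_lt' i t)⟩ + w t := rfl
        rw [this, map_add, hw2 t]
        show c t + (c' t - c t) = c' t
        abel
      intro v hv
      have hvmem : Wi.mkQ ⟨v, hv⟩ ∈ Submodule.span 𝒪 (Set.range (Wi.mkQ ∘ yvS)) := by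
        have hrange : Set.range (⇑Wi.mkQ ∘ yvS) = Set.range c' := by
          have hfun : ⇑Wi.mkQ ∘ yvS = c' := funext hπyvS
          rw [hfun]
        rw [hrange, hspanc']
        trivial
      rw [Set.range_comp, ← Submodule.map_span] at hvmem
      obtain ⟨u, hu, huq⟩ := Submodule.mem_map.mp hvmem
      have hdiffW : (⟨v, hv⟩ : ↥(FL i.succ)) - u ∈ Wi := by
        rw [← Submodule.Quotient.eq]
        exact huq.symm
      have hu1 : u.1 ∈ Submodule.span 𝒪 (Set.range yv) := by
        have : u.1 ∈ Submodule.map (FL i.succ).subtype (Submodule.span 𝒪 (Set.range yvS)) :=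
          ⟨u, hu, rfl⟩
        rw [Submodule.map_span] at this
        have hr : (FL i.succ).subtype '' Set.range yvS = Set.range yv := by
          rw [← Set.range_comp]
          rfl
        rwa [hr] at this
      have hdiffW' : v - u.1 ∈ FL i.castSucc := hdiffW
      have hvdec : v = (v - u.1) + u.1 := by abel
      rw [hvdec]
      exact Submodule.add_mem_sup hdiffW' hu1
  choose yv P1 P2 P3 using hlevel
  -- assembling the global sequence
  have htlt : ∀ j : Fin n, (j : ℕ) - psum nvec (lev j) < nvec ⟨lev j, hlev1 j⟩ := by
    intro j
    have h1 := hlev2 j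
    have h2 := hlev3 j
    have h3 := psum_succ nvec (lev j) (hlev1 j)
    omega
  set y : Fin n → L := fun j => yv ⟨lev j, hlev1 j⟩ ⟨(j : ℕ) - psum nvec (lev j), htlt j⟩
    with hydef
  -- identity (E)
  have haux : ∀ (i i' : Fin r) (h : i = i') (t : Fin (nvec i)),
      yv i t = yv i' ⟨(t : ℕ), h ▸ t.isLt⟩ := by
    rintro i i' rfl t
    rfl
  have hE : ∀ (i : Fin r) (t : Fin (nvec i)), y (emb i t) = yv i t := by
    intro i t
    have hl : lev (emb i t) = (i : ℕ) := hlev_emb i t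
    have hfin : (⟨lev (emb i t), hlev1 _⟩ : Fin r) = i := Fin.ext hl
    rw [hydef]
    simp only []
    rw [haux _ i hfin]
    congr 1
    apply Fin.ext
    simp only [hembdef]
    have : ((emb i t : Fin n) : ℕ) = psum nvec (i : ℕ) + (t : ℕ) := rfl
    rw [show lev ⟨psum nvec (i : ℕ) + (t : ℕ), hemb_lt i t⟩ = (i : ℕ) from hl]
    omega
  have hembj : ∀ j : Fin n, emb ⟨lev j, hlev1 j⟩ ⟨(j : ℕ) - psum nvec (lev j), htlt j⟩ = j := by
    intro j
    apply Fin.ext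
    have h1 := hlev2 j
    simp only [hembdef]
    omega
  -- property (C1)
  have hC1 : ∀ j, f (y j) = x j := by
    intro j
    rw [hydef]
    simp only []
    rw [P2, hembj j]
  -- property (C2) by induction
  have hC2nat : ∀ i : ℕ, ∀ h : i ≤ r,
      Submodule.span 𝒪 (y '' {j : Fin n | (j : ℕ) < psum nvec i}) = FL ⟨i, by omega⟩ := by
    intro i
    induction i with
    | zero =>
      intro h
      have hempty : {j : Fin n | (j : ℕ) < psum nvec 0} = (∅ : Set (Fin n)) := by
        ext j
        simp [psum_zero]
      rw [hempty]
      simp only [Set.image_empty, Submodule.span_empty]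
      rw [show (⟨0, by omega⟩ : Fin (r+1)) = 0 from rfl, h0]
    | succ i ih =>
      intro h
      have hir : i < r := by omega
      set ifin : Fin r := ⟨i, hir⟩ with hifin
      have hsetsplit : y '' {j : Fin n | (j : ℕ) < psum nvec (i + 1)} =
          (y '' {j : Fin n | (j : ℕ) < psum nvec i}) ∪ Set.range (yv ifin) := by
        apply Set.Subset.antisymm
        · rintro _ ⟨j, hj, rfl⟩
          simp only [Set.mem_setOf_eq] at hj
          by_cases hcase : (j : ℕ) < psum nvec i
          · exact Or.inl ⟨j, hcase, rfl⟩
          · push_neg at hcase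
            right
            have hlt : (j : ℕ) - psum nvec i < nvec ifin := by
              have hps := hpsucc ifin
              rw [show ((ifin : Fin r) : ℕ) = i from rfl] at hps
              omega
            refine ⟨⟨(j : ℕ) - psum nvec i, hlt⟩, ?_⟩
            have hjemb : emb ifin ⟨(j : ℕ) - psum nvec i, hlt⟩ = j := by
              apply Fin.ext
              simp only [hembdef, show ((ifin : Fin r) : ℕ) = i from rfl]
              omega
            exact (hE ifin _).symm.trans (congrArg y hjemb)
        · rintro _ (⟨j, hj, rfl⟩ | ⟨t, rfl⟩)
          · have hmono2 : psum nvec i ≤ psum nvec (i+1) := psum_mono nvec (by omega)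
            exact ⟨j, by simp only [Set.mem_setOf_eq] at hj ⊢; omega, rfl⟩
          · refine ⟨emb ifin t, ?_, hE ifin t⟩
            simp only [Set.mem_setOf_eq]
            have h5 := hemb_lt' ifin t
            rwa [show ((ifin : Fin r) : ℕ) = i from rfl] at h5
      rw [hsetsplit, Submodule.span_union, ih (by omega)]
      -- now: FL ⟨i⟩ ⊔ span (range (yv ifin)) = FL ⟨i+1⟩
      have hcast : (⟨i, by omega⟩ : Fin (r+1)) = ifin.castSucc := rfl
      have hsucc2 : (⟨i + 1, by omega⟩ : Fin (r+1)) = ifin.succ := rfl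
      rw [hcast, hsucc2]
      apply le_antisymm
      · apply sup_le
        · exact hmono (by rw [Fin.le_def]; simp [hifin])
        · rw [Submodule.span_le]
          rintro _ ⟨t, rfl⟩
          exact P1 ifin t
      · exact P3 ifin
  have hC2 : ∀ i : Fin (r + 1),
      Submodule.span 𝒪 (y '' {j : Fin n | (j : ℕ) < psum nvec (i : ℕ)}) = FL i := by
    intro i
    have := hC2nat (i : ℕ) (by omega)
    rwa [show (⟨(i : ℕ), by omega⟩ : Fin (r+1)) = i from Fin.ext rfl] at this
  -- the basis
  have hspan_top : Submodule.span 𝒪 (Set.range y) = ⊤ := by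
    have := hC2 (Fin.last r)
    have hall : {j : Fin n | (j : ℕ) < psum nvec ((Fin.last r : Fin (r+1)) : ℕ)} =
        Set.univ := by
      ext j
      simp only [Set.mem_setOf_eq, Set.mem_univ, iff_true, Fin.val_last, hpsum_n]
      exact j.isLt
    rw [hall, Set.image_univ, htop] at this
    exact this
  obtain ⟨b, hb⟩ := basis_of_span_eq_top hrank y hspan_top
  exact ⟨y, hC1, hC2, b, hb⟩
end
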